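/- arXiv:2105.02854 — 9 statements merged into one kernel-verified Lean document; each statement's English description precedes it below -/
import Mathlib

section
/- Let D be a square-free integer with D ≠ 1, and let I ⊆ ℤ[√D] be an ideal (as a ℤ-submodule of rank 2) that is not divisible by any rational integer greater than 1. Then I has a ℤ-basis of the form {√D + μ, m}, where m > 0 is a positive integer and μ is an integer satisfying μ² ≡ D (mod m). Conversely, for any positive integer m and integer μ with μ² ≡ D (mod m), the ℤ-submodule of ℤ[√D] with ℤ-basis {√D + μ, m} is an ideal of ℤ[√D]. -/
/-- An ideal `I` of `ℤ[√D]` is *primitive* (not divisible by any rational integer `a > 1`)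
if there is no integer `a > 1` dividing every element of `I`. -/
def PrimitiveIdeal {D : ℤ} (I : Ideal (Zsqrtd D)) : Prop :=
  ¬ ∃ a : ℤ, 1 < a ∧ ∀ x ∈ I, (a : Zsqrtd D) ∣ x

/-- The ℤ-submodule of `ℤ[√D]` spanned by `√D + μ` and `m`. -/
def rootLattice (D m μ : ℤ) : Submodule ℤ (Zsqrtd D) :=
  Submodule.span ℤ {Zsqrtd.sqrtd + (μ : Zsqrtd D), (m : Zsqrtd D)}

def imLM (D : ℤ) : Zsqrtd D →ₗ[ℤ] ℤ where
  toFun x := x.im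
  map_add' x y := Zsqrtd.im_add x y
  map_smul' n x := by simp [zsmul_eq_mul, Zsqrtd.im_smul]


lemma converse_aux (D m μ : ℤ) (hmod : μ ^ 2 ≡ D [ZMOD m]) :
    ∃ J : Ideal (Zsqrtd D), J.restrictScalars ℤ = rootLattice D m μ := by
  obtain ⟨k, hk⟩ : m ∣ D - μ ^ 2 := Int.ModEq.dvd hmod
  set L := rootLattice D m μ with hL
  have hmem1 : Zsqrtd.sqrtd + (μ : Zsqrtd D) ∈ L :=
    Submodule.subset_span (Set.mem_insert _ _)
  have hmem2 : ((m : ℤ) : Zsqrtd D) ∈ L :=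
    Submodule.subset_span (Set.mem_insert_of_mem _ rfl)
  have hsq : ∀ x ∈ L, Zsqrtd.sqrtd * x ∈ L := by
    intro x hx
    induction hx using Submodule.span_induction with
    | mem y hy =>
      rcases hy with rfl | hy
      · refine Submodule.mem_span_pair.mpr ⟨μ, k, ?_⟩
        ext <;> simp [zsmul_eq_mul, Zsqrtd.re_mul, Zsqrtd.im_mul] <;> nlinarith [hk]
      · rcases hy with rfl
        refine Submodule.mem_span_pair.mpr ⟨m, -μ, ?_⟩
        ext <;> simp [zsmul_eq_mul, Zsqrtd.re_mul, Zsqrtd.im_mul] <;> ring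
    | zero => simp
    | add a b _ _ ha hb => rw [mul_add]; exact L.add_mem ha hb
    | smul n a _ ha => rw [mul_smul_comm]; exact L.smul_mem n ha
  have hmul : ∀ (r : Zsqrtd D) (x : Zsqrtd D), x ∈ L → r * x ∈ L := by
    intro r x hx
    have : r * x = r.re • x + r.im • (Zsqrtd.sqrtd * x) := by
      rw [zsmul_eq_mul, zsmul_eq_mul, ← mul_assoc, ← add_mul]
      congr 1
      ext <;> simp
    rw [this]
    exact L.add_mem (L.smul_mem _ hx) (L.smul_mem _ (hsq x hx))
  refine ⟨{ carrier := L, add_mem' := fun ha hb => L.add_mem ha hb,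
            zero_mem' := L.zero_mem,
            smul_mem' := fun r x hx => hmul r x hx }, ?_⟩
  rfl

lemma nonsq {D : ℤ} (hD : Squarefree D) (hD1 : D ≠ 1) : ∀ n : ℤ, D ≠ n * n := by
  intro n h
  have hu : IsUnit n := hD n (h ▸ dvd_refl D)
  rcases Int.isUnit_iff.mp hu with h1 | h1 <;> simp [h1] at h <;> omega

lemma main_aux (D : ℤ) (hD : Squarefree D) (hD1 : D ≠ 1)
    (I : Ideal (Zsqrtd D)) (hne : I ≠ ⊥) (hprim : PrimitiveIdeal I) :
    ∃ m μ : ℤ, 0 < m ∧ μ ^ 2 ≡ D [ZMOD m] ∧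
      I.restrictScalars ℤ = rootLattice D m μ := by
  have hns := nonsq hD hD1
  -- the ideal of rational integers in I
  set A : Ideal ℤ := I.comap (algebraMap ℤ (Zsqrtd D)) with hAdef
  have hAmem : ∀ a : ℤ, a ∈ A ↔ ((a : Zsqrtd D) ∈ I) := by
    intro a; rw [hAdef, Ideal.mem_comap, algebraMap_int_eq]; rfl
  have spanDvd : ∀ a b : ℤ, a ∈ Submodule.span ℤ {b} ↔ b ∣ a := fun a b =>
    Ideal.mem_span_singleton
  obtain ⟨m₀, hA⟩ := (IsPrincipalIdealRing.principal A).principal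
  -- the ideal of im-parts of I
  set B : Ideal ℤ := Submodule.map (imLM D) (I.restrictScalars ℤ) with hBdef
  have hBmem : ∀ x ∈ I, x.im ∈ B := fun x hx => ⟨x, hx, rfl⟩
  obtain ⟨g₀, hB⟩ := (IsPrincipalIdealRing.principal B).principal
  -- I ≠ ⊥ gives a nonzero element
  obtain ⟨z, hzI, hz0⟩ := (Submodule.ne_bot_iff I).mp hne
  -- m₀ ≠ 0
  have hnormA : ∀ x ∈ I, Zsqrtd.norm x ∈ A := by
    intro x hx
    rw [hAmem, Zsqrtd.norm_eq_mul_conj]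
    exact I.mul_mem_right _ hx
  have hm₀ : m₀ ≠ 0 := by
    rintro rfl
    have := (spanDvd _ _).mp (hA ▸ hnormA z hzI)
    rw [zero_dvd_iff] at this
    exact hz0 ((Zsqrtd.norm_eq_zero hns z).mp this)
  -- g₀ ≠ 0
  have hg₀ : g₀ ≠ 0 := by
    rintro rfl
    have him : ∀ x ∈ I, x.im = 0 := by
      intro x hx
      have := (spanDvd _ _).mp (hB ▸ hBmem x hx)
      rwa [zero_dvd_iff] at this
    have h1 := him z hzI
    have h2 := him (Zsqrtd.sqrtd * z) (I.mul_mem_left _ hzI)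
    simp [Zsqrtd.im_mul, h1] at h2
    exact hz0 (Zsqrtd.ext h2 h1)
  -- positive generators
  set m : ℤ := (m₀.natAbs : ℤ) with hmdef
  set g : ℤ := (g₀.natAbs : ℤ) with hgdef
  have hmpos : 0 < m := by simpa [hmdef] using Int.natAbs_pos.mpr hm₀
  have hgpos : 0 < g := by simpa [hgdef] using Int.natAbs_pos.mpr hg₀
  have hAm : ∀ a : ℤ, a ∈ A ↔ m ∣ a := by
    intro a
    rw [hA, spanDvd, hmdef, Int.natAbs_dvd]
  have hBg : ∀ a : ℤ, a ∈ B ↔ g ∣ a := by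
    intro a
    rw [hB, spanDvd, hgdef, Int.natAbs_dvd]
  have hmI : ((m : ℤ) : Zsqrtd D) ∈ I := by
    rw [← hAmem, hAm]
  have hgB : g ∈ B := (hBg g).mpr dvd_rfl
  -- element β with im = g
  obtain ⟨β, hβI, hβim⟩ : ∃ β ∈ I, β.im = g := by
    obtain ⟨β, hβ, h⟩ := hgB
    exact ⟨β, hβ, h⟩
  -- g divides β.re
  obtain ⟨ν, hν⟩ : g ∣ β.re := by
    rw [← hBg]
    have := hBmem (Zsqrtd.sqrtd * β) (I.mul_mem_left _ hβI)
    simpa [Zsqrtd.im_mul] using this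
  -- g divides m
  obtain ⟨m', hm'⟩ : g ∣ m := by
    rw [← hBg]
    have := hBmem (Zsqrtd.sqrtd * (m : Zsqrtd D)) (I.mul_mem_left _ hmI)
    simpa [Zsqrtd.im_mul] using this
  -- decomposition of any element of I
  have key : ∀ x ∈ I, ∃ t s : ℤ, x = (t : Zsqrtd D) * β + (s : Zsqrtd D) * (m : Zsqrtd D) := by
    intro x hx
    obtain ⟨t, ht⟩ : g ∣ x.im := (hBg _).mp (hBmem x hx)
    have hyI : x - (t : Zsqrtd D) * β ∈ I := I.sub_mem hx (I.mul_mem_left _ hβI)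
    have hyim : (x - (t : Zsqrtd D) * β).im = 0 := by
      simp [Zsqrtd.im_sub, Zsqrtd.im_smul, hβim, ht, mul_comm]
    set y := x - (t : Zsqrtd D) * β with hy
    have hycast : y = ((y.re : ℤ) : Zsqrtd D) := Zsqrtd.ext (by simp) (by simp [hyim])
    have hyA : y.re ∈ A := by rw [hAmem, ← hycast]; exact hyI
    obtain ⟨s, hs⟩ : m ∣ y.re := (hAm _).mp hyA
    refine ⟨t, s, ?_⟩
    have : x = (t : Zsqrtd D) * β + y := by rw [hy]; ring
    rw [this, hycast, hs]
    push_cast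
    ring
  -- primitivity forces g = 1
  have hg1 : g = 1 := by
    by_contra hg
    refine hprim ⟨g, lt_of_le_of_ne hgpos (fun h => hg h.symm), ?_⟩
    intro x hx
    obtain ⟨t, s, rfl⟩ := key x hx
    have hdb : (g : Zsqrtd D) ∣ β := by
      rw [Zsqrtd.intCast_dvd]
      exact ⟨⟨ν, hν⟩, ⟨1, by rw [hβim, mul_one]⟩⟩
    have hdm : (g : Zsqrtd D) ∣ ((m : ℤ) : Zsqrtd D) := by
      rw [Zsqrtd.intCast_dvd]
      refine ⟨by simpa using ⟨m', hm'⟩, by simp⟩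
    exact dvd_add (Dvd.dvd.mul_left hdb _) (Dvd.dvd.mul_left hdm _)
  -- now β = sqrtd + μ
  set μ : ℤ := β.re with hμdef
  have hβ : β = Zsqrtd.sqrtd + (μ : Zsqrtd D) :=
    Zsqrtd.ext (by simp [hμdef]) (by simp [hβim, hg1])
  -- μ² ≡ D (mod m)
  have hmod : μ ^ 2 ≡ D [ZMOD m] := by
    have hnb : Zsqrtd.norm β ∈ A := hnormA β hβI
    have : m ∣ μ * μ - D := by
      have h := (hAm _).mp hnb
      rw [Zsqrtd.norm_def, hβim, hg1] at h
      simpa [hμdef, mul_one] using h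
    have h2 : m ∣ D - μ ^ 2 := by
      have := dvd_neg.mpr this
      simpa [sq, neg_sub] using this
    exact Int.modEq_iff_dvd.mpr h2
  refine ⟨m, μ, hmpos, hmod, ?_⟩
  apply le_antisymm
  · intro x hx
    have hx' : x ∈ I := hx
    obtain ⟨t, s, rfl⟩ := key x hx'
    refine Submodule.mem_span_pair.mpr ⟨t, s, ?_⟩
    rw [hβ, zsmul_eq_mul, zsmul_eq_mul]
  · rw [rootLattice, Submodule.span_le]
    rintro y (rfl | rfl)
    · rw [← hβ]; exact hβI
    · exact hmI


/-- For `D` squarefree, `D ≠ 1`, every nonzero primitive ideal of `ℤ[√D]` has a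
ℤ-basis `{√D + μ, m}` with `m > 0` and `μ² ≡ D (mod m)`; conversely every such span is an
ideal of `ℤ[√D]`. -/
theorem stmt_0 (D : ℤ) (hD : Squarefree D) (hD1 : D ≠ 1) :
    (∀ I : Ideal (Zsqrtd D), I ≠ ⊥ → PrimitiveIdeal I →
      ∃ m μ : ℤ, 0 < m ∧ μ ^ 2 ≡ D [ZMOD m] ∧
        I.restrictScalars ℤ = rootLattice D m μ) ∧
    (∀ m μ : ℤ, 0 < m → μ ^ 2 ≡ D [ZMOD m] →
      ∃ J : Ideal (Zsqrtd D), J.restrictScalars ℤ = rootLattice D m μ) := by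
  exact ⟨fun I h1 h2 => main_aux D hD hD1 I h1 h2,
    fun m μ _ hmod => converse_aux D m μ hmod⟩
end

section
/- For u, v, s ∈ ℝ with v, s > 0, consider the matrix g⁻¹ = n(u)·a(v)·k(π/2)·a(s)⁻¹ in SL(2,ℝ), where n(u) = [[1,u],[0,1]], a(v) = [[√v,0],[0,1/√v]], and k(θ) = [[cos(θ/2), −sin(θ/2)],[sin(θ/2), cos(θ/2)]]. Then the Iwasawa coordinates (x, y, θ) of g⁻¹, defined by g⁻¹ = n(x)·a(y)·k(θ), are given by x = u − v·(s² − 1)/(s² + 1), y = 2sv/(s² + 1), and θ = 2·arctan(1/s). -/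
open Real Matrix

/-- Upper unipotent matrix `n(x)`. -/
noncomputable def nMat (x : ℝ) : Matrix (Fin 2) (Fin 2) ℝ := !![1, x; 0, 1]

/-- Diagonal matrix `a(y) = diag(√y, 1/√y)`. -/
noncomputable def aMat (y : ℝ) : Matrix (Fin 2) (Fin 2) ℝ :=
  !![Real.sqrt y, 0; 0, 1 / Real.sqrt y]

/-- Rotation matrix `k(θ)`. -/
noncomputable def kMat (θ : ℝ) : Matrix (Fin 2) (Fin 2) ℝ :=
  !![Real.cos (θ / 2), -Real.sin (θ / 2); Real.sin (θ / 2), Real.cos (θ / 2)]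

/-- the Iwasawa coordinates of `g⁻¹ = n(u)·a(v)·k(π/2)·a(s)⁻¹` are
`x = u − v(s²−1)/(s²+1)`, `y = 2sv/(s²+1)`, `θ = 2 arctan(1/s)`. -/
theorem stmt_2 (u v s : ℝ) (hv : 0 < v) (hs : 0 < s) :
    nMat u * aMat v * kMat (Real.pi / 2) * (aMat s)⁻¹ =
      nMat (u - v * (s ^ 2 - 1) / (s ^ 2 + 1)) * aMat (2 * s * v / (s ^ 2 + 1)) *
        kMat (2 * Real.arctan (1 / s)) := by
  have hbs : (0:ℝ) < Real.sqrt s := Real.sqrt_pos.mpr hs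
  have hainv : (aMat s)⁻¹ = !![1 / Real.sqrt s, 0; 0, Real.sqrt s] := by
    apply Matrix.inv_eq_right_inv
    rw [aMat, Matrix.mul_fin_two]
    rw [show (1:Matrix (Fin 2) (Fin 2) ℝ) = !![1,0;0,1] from Matrix.one_fin_two]
    congr 1 <;> field_simp <;> simp
  have hsp1 : (0:ℝ) < s ^ 2 + 1 := by positivity
  have hd : (0:ℝ) < Real.sqrt (s^2+1) := Real.sqrt_pos.mpr hsp1
  have hdsq : Real.sqrt (s^2+1) ^ 2 = s^2+1 := Real.sq_sqrt hsp1.le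
  have hc : (0:ℝ) < Real.sqrt v := Real.sqrt_pos.mpr hv
  have hcsq : Real.sqrt v ^ 2 = v := Real.sq_sqrt hv.le
  have hbsq : Real.sqrt s ^ 2 = s := Real.sq_sqrt hs.le
  have ha : (0:ℝ) < Real.sqrt 2 := by positivity
  have hasq : Real.sqrt 2 ^ 2 = 2 := Real.sq_sqrt (by norm_num)
  have hY : Real.sqrt (2 * s * v / (s ^ 2 + 1)) =
      Real.sqrt 2 * Real.sqrt s * Real.sqrt v / Real.sqrt (s^2+1) := by
    rw [Real.sqrt_div (by positivity), Real.sqrt_mul (by positivity),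
      Real.sqrt_mul (by norm_num)]
  have h1s : Real.sqrt (1 + (1/s)^2) = Real.sqrt (s^2+1) / s := by
    rw [show (1 + (1/s)^2 : ℝ) = (s^2+1)/s^2 by field_simp,
      Real.sqrt_div hsp1.le, Real.sqrt_sq hs.le]
  have harg : 2 * Real.arctan (1 / s) / 2 = Real.arctan (1/s) := by ring
  have hcos : Real.cos (2 * Real.arctan (1 / s) / 2) = s / Real.sqrt (s^2+1) := by
    rw [harg, Real.cos_arctan, h1s]; field_simp
  have hsin : Real.sin (2 * Real.arctan (1 / s) / 2) = 1 / Real.sqrt (s^2+1) := by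
    rw [harg, Real.sin_arctan, h1s]; field_simp
  rw [hainv, nMat, nMat, aMat, aMat, kMat, kMat, hcos, hsin, hY]
  rw [show (Real.pi / 2) / 2 = Real.pi / 4 by ring, Real.cos_pi_div_four,
    Real.sin_pi_div_four]
  ext i j
  fin_cases i <;> fin_cases j <;>
    simp [Matrix.mul_apply, Fin.sum_univ_succ] <;>
    field_simp <;> ring_nf <;>
    simp only [hasq, hbsq, hcsq, show Real.sqrt (1 + s ^ 2) ^ 2 = 1 + s ^ 2 from by
        rw [add_comm]; exact hdsq, show Real.sqrt v ^ 3 = v * Real.sqrt v from by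
        rw [pow_succ, hcsq], show Real.sqrt s ^ 3 = s * Real.sqrt s from by
        rw [pow_succ, hbsq]] <;> ring
end

section
/- Define for q ∈ ℝ, |q| > 1 or |q| < 1, the functions h_q(s) = log((s+q)/(1−s²)), s₁(q,v) = (−q + √(v²+q²−1))/(v+1), and s₂(q,v) = v − q − √(v²+q²−1). Then for q > 1 and v > 0 sufficiently small, h_q(s₁(q,v)) − h_q(−q + √(q²−1)) = ((q − √(q²−1))/(2√(q²−1)))·v² + O(v³/q²), where the implied constant is absolute for q bounded away from 1. -/
open Real

/-- `h_q(s) = log((s+q)/(1−s²))`. -/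
noncomputable def hFun (q s : ℝ) : ℝ := Real.log ((s + q) / (1 - s ^ 2))

/-- `s₁(q,v) = (−q + √(v²+q²−1))/(v+1)`. -/
noncomputable def s1Fun (q v : ℝ) : ℝ := (-q + Real.sqrt (v ^ 2 + q ^ 2 - 1)) / (v + 1)

set_option maxHeartbeats 1000000 in
/-- for `q ≥ 1 + η` and `v > 0` small,
`h_q(s₁(q,v)) − h_q(−q+√(q²−1)) = ((q−√(q²−1))/(2√(q²−1)))·v² + O(v³/q²)`,
uniformly in `q`. -/
theorem stmt_8 (η : ℝ) (hη : 0 < η) :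
    ∃ C > 0, ∃ v₀ > 0, ∀ q : ℝ, 1 + η ≤ q → ∀ v : ℝ, 0 < v → v ≤ v₀ →
      |hFun q (s1Fun q v) - hFun q (-q + Real.sqrt (q ^ 2 - 1)) -
        (q - Real.sqrt (q ^ 2 - 1)) / (2 * Real.sqrt (q ^ 2 - 1)) * v ^ 2|
        ≤ C * v ^ 3 / q ^ 2 := by
  have h1η : (0:ℝ) < 1 + η := by linarith
  set a := Real.sqrt (η / (1 + η)) with ha_def
  have ha2 : a ^ 2 = η / (1 + η) := Real.sq_sqrt (by positivity)
  have ha0 : 0 < a := Real.sqrt_pos.mpr (by positivity)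
  have ha1 : a ≤ 1 := by
    have h : η / (1 + η) ≤ 1 := by rw [div_le_one h1η]; linarith
    nlinarith [ha2, ha0]
  refine ⟨20 / a ^ 8, by positivity, min 1 (a ^ 2 / 3), by positivity, ?_⟩
  intro q hq v hv0 hvle
  have hv1 : v ≤ 1 := le_trans hvle (min_le_left _ _)
  have hva : v ≤ a ^ 2 / 3 := le_trans hvle (min_le_right _ _)
  have hq1 : (1:ℝ) < q := by linarith
  obtain ⟨r, hr_def⟩ : ∃ r : ℝ, r = Real.sqrt (q ^ 2 - 1) := ⟨_, rfl⟩
  rw [← hr_def]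
  have hr2 : r ^ 2 = q ^ 2 - 1 := by rw [hr_def]; exact Real.sq_sqrt (by nlinarith)
  have hr0 : 0 < r := by rw [hr_def]; exact Real.sqrt_pos.mpr (by nlinarith)
  have hrq : r < q := by nlinarith
  have hqr0 : 0 < q - r := by linarith
  have haq : a * q ≤ r := by
    rw [hr_def, Real.le_sqrt' (by positivity)]
    have : a ^ 2 * q ^ 2 ≤ q ^ 2 - 1 := by
      rw [ha2, div_mul_eq_mul_div, div_le_iff₀ h1η]; nlinarith
    nlinarith [this]
  have ha2q : a ^ 2 * q ^ 2 ≤ r ^ 2 := by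
    nlinarith [mul_le_mul haq haq (by positivity : (0:ℝ) ≤ a * q) hr0.le]
  obtain ⟨w, hw_def⟩ : ∃ w : ℝ, w = Real.sqrt (v ^ 2 + q ^ 2 - 1) := ⟨_, rfl⟩
  have hw2 : w ^ 2 = v ^ 2 + q ^ 2 - 1 := by rw [hw_def]; exact Real.sq_sqrt (by nlinarith)
  have hw0 : 0 < w := by rw [hw_def]; exact Real.sqrt_pos.mpr (by nlinarith)
  have hwr : r ≤ w := by
    rw [hr_def, hw_def]; exact Real.sqrt_le_sqrt (by nlinarith)
  have hd : (w - r) * (w + r) = v ^ 2 := by linear_combination hw2 - hr2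
  have hd0 : 0 ≤ w - r := by linarith
  have hd2r : (w - r) * (2 * r) ≤ v ^ 2 := by
    have h := mul_le_mul_of_nonneg_left (show 2 * r ≤ w + r by linarith) hd0
    linarith [hd, h]
  have hqr1 : (q - r) * (q + r) = 1 := by linear_combination -hr2
  have h2rqr : 2 * r * (q - r) ≤ 1 := by nlinarith [hqr1, hqr0, hr0]
  obtain ⟨A, hA_def⟩ : ∃ A : ℝ, A = (q - r) * (q * v + w) * (v + 1) := ⟨_, rfl⟩
  obtain ⟨B, hB_def⟩ : ∃ B : ℝ, B = v + q * w - r ^ 2 := ⟨_, rfl⟩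
  have hB0 : 0 < B := by
    have : q * r ≤ q * w := by nlinarith [hwr, hq1]
    nlinarith [mul_pos hr0 hqr0]
  have hBlb : r * (q - r) ≤ B := by
    have : q * r ≤ q * w := by nlinarith [hwr, hq1]
    nlinarith
  have hq0 : (0:ℝ) < q := by linarith
  have hA0 : 0 < A := by
    have h1 : 0 < q * v + w := by positivity
    have h2 : (0:ℝ) < v + 1 := by linarith
    rw [hA_def]; exact mul_pos (mul_pos hqr0 h1) h2
  obtain ⟨N, hN_def⟩ : ∃ N : ℝ, N = 2 * r * (A - B) - (q - r) * v ^ 2 * B := ⟨_, rfl⟩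
  have hN : N = r * (w - r) ^ 2 - (q - r) * v ^ 3 - q * (q - r) * v ^ 2 * (w - r)
      + 2 * r * (q - r) * v * (w - r) := by
    rw [hN_def, hA_def, hB_def]
    linear_combination (r - r * v ^ 2 - 2 * r * v) * hr2 - r * hw2
  -- bound |N| * (a * r) ≤ 2 * v ^ 3
  have hrd : r * (w - r) ≤ v ^ 2 / 2 := by nlinarith [hd2r]
  have hrd0 : 0 ≤ r * (w - r) := mul_nonneg hr0.le hd0
  have hrqr : r * (q - r) ≤ 1 / 2 := by linarith [h2rqr]
  have hrqr0 : 0 ≤ r * (q - r) := mul_nonneg hr0.le hqr0.le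
  have hv43 : v ^ 4 ≤ v ^ 3 := by
    nlinarith [mul_nonneg (pow_pos hv0 3).le (by linarith : (0:ℝ) ≤ 1 - v)]
  have t1 : a * r * (r * (w - r) ^ 2) ≤ v ^ 3 / 4 := by
    have h1 : (r * (w - r)) ^ 2 ≤ (v ^ 2 / 2) ^ 2 := pow_le_pow_left₀ hrd0 hrd 2
    calc a * r * (r * (w - r) ^ 2) = a * (r * (w - r)) ^ 2 := by ring
      _ ≤ 1 * (v ^ 2 / 2) ^ 2 := mul_le_mul ha1 h1 (by positivity) (by norm_num)
      _ = v ^ 4 / 4 := by ring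
      _ ≤ v ^ 3 / 4 := by linarith
  have t2 : a * r * ((q - r) * v ^ 3) ≤ v ^ 3 / 2 := by
    have h1 : a * (r * (q - r)) ≤ 1 * (1 / 2) :=
      mul_le_mul ha1 hrqr hrqr0 (by norm_num)
    calc a * r * ((q - r) * v ^ 3) = (a * (r * (q - r))) * v ^ 3 := by ring
      _ ≤ (1 * (1 / 2)) * v ^ 3 :=
          mul_le_mul_of_nonneg_right h1 (pow_pos hv0 3).le
      _ = v ^ 3 / 2 := by ring
  have t3 : a * r * (q * (q - r) * v ^ 2 * (w - r)) ≤ v ^ 3 / 4 := by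
    have hx0 : 0 ≤ (q - r) * (r * (w - r)) * v ^ 2 := by positivity
    have h1 : (a * q) * ((q - r) * (r * (w - r)) * v ^ 2) ≤ r * ((q - r) * (r * (w - r)) * v ^ 2) :=
      mul_le_mul_of_nonneg_right haq hx0
    have h2 : (r * (q - r)) * (r * (w - r)) ≤ (1 / 2) * (v ^ 2 / 2) :=
      mul_le_mul hrqr hrd hrd0 (by norm_num)
    have h3 : ((r * (q - r)) * (r * (w - r))) * v ^ 2 ≤ ((1 / 2) * (v ^ 2 / 2)) * v ^ 2 :=
      mul_le_mul_of_nonneg_right h2 (sq_nonneg v)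
    calc a * r * (q * (q - r) * v ^ 2 * (w - r))
        = (a * q) * ((q - r) * (r * (w - r)) * v ^ 2) := by ring
      _ ≤ r * ((q - r) * (r * (w - r)) * v ^ 2) := h1
      _ = ((r * (q - r)) * (r * (w - r))) * v ^ 2 := by ring
      _ ≤ ((1 / 2) * (v ^ 2 / 2)) * v ^ 2 := h3
      _ = v ^ 4 / 4 := by ring
      _ ≤ v ^ 3 / 4 := by linarith
  have t4 : a * r * (2 * r * (q - r) * v * (w - r)) ≤ v ^ 3 / 2 := by
    have h1 : (r * (q - r)) * (r * (w - r)) ≤ (1 / 2) * (v ^ 2 / 2) :=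
      mul_le_mul hrqr hrd hrd0 (by norm_num)
    have h2 : ((r * (q - r)) * (r * (w - r))) * v ≤ ((1 / 2) * (v ^ 2 / 2)) * v :=
      mul_le_mul_of_nonneg_right h1 hv0.le
    have h3 : a * (((r * (q - r)) * (r * (w - r))) * v) ≤ 1 * (((1 / 2) * (v ^ 2 / 2)) * v) :=
      mul_le_mul ha1 h2 (by positivity) (by norm_num)
    calc a * r * (2 * r * (q - r) * v * (w - r))
        = 2 * (a * (((r * (q - r)) * (r * (w - r))) * v)) := by ring
      _ ≤ 2 * (1 * (((1 / 2) * (v ^ 2 / 2)) * v)) := by linarith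
      _ = v ^ 3 / 2 := by ring
  have hterm_nonneg1 : 0 ≤ a * r * (r * (w - r) ^ 2) := by positivity
  have hterm_nonneg2 : 0 ≤ a * r * ((q - r) * v ^ 3) := by positivity
  have hterm_nonneg4 : 0 ≤ a * r * (2 * r * (q - r) * v * (w - r)) := by positivity
  have hterm_nonneg3 : 0 ≤ a * r * (q * (q - r) * v ^ 2 * (w - r)) := by
    have hq0 : (0:ℝ) < q := by linarith
    positivity
  have hNar : N * (a * r) = a * r * (r * (w - r) ^ 2) - a * r * ((q - r) * v ^ 3)
      - a * r * (q * (q - r) * v ^ 2 * (w - r)) + a * r * (2 * r * (q - r) * v * (w - r)) := by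
    rw [hN]; ring
  have hNub : |N| ≤ 2 * v ^ 3 / (a * r) := by
    rw [abs_le]
    constructor
    · rw [neg_le, le_div_iff₀ (by positivity)]
      linarith only [hNar, t2, t3, hterm_nonneg1, hterm_nonneg4, pow_pos hv0 3]
    · rw [le_div_iff₀ (by positivity)]
      linarith only [hNar, t1, t4, hterm_nonneg2, hterm_nonneg3, pow_pos hv0 3]
  have h2rB : a ^ 2 * q ≤ 2 * r * B := by
    have hqrlb : 1 ≤ (q - r) * (2 * q) := by nlinarith only [hqr1, sq_nonneg (q - r)]
    have h5 : r ^ 2 ≤ 2 * r ^ 2 * (q - r) * q := by nlinarith only [hqrlb, sq_nonneg r]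
    have h6 : a ^ 2 * q * q ≤ (2 * r ^ 2 * (q - r)) * q := by linarith only [ha2q, h5]
    have h7 : a ^ 2 * q ≤ 2 * r ^ 2 * (q - r) :=
      le_of_mul_le_mul_right h6 (by linarith : (0:ℝ) < q)
    have h8 : 2 * r * (r * (q - r)) ≤ 2 * r * B :=
      mul_le_mul_of_nonneg_left hBlb (by positivity)
    have h9 : 2 * r * (r * (q - r)) = 2 * r ^ 2 * (q - r) := by ring
    linarith only [h7, h8, h9]
  have hBne : B ≠ 0 := ne_of_gt hB0
  have hrne : r ≠ 0 := ne_of_gt hr0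
  have hqrne : q - r ≠ 0 := ne_of_gt hqr0
  have heq : (A - B) / B - (q - r) / (2 * r) * v ^ 2 = N / (2 * r * B) := by
    rw [hN_def]; field_simp
  have hE1 : |(A - B) / B - (q - r) / (2 * r) * v ^ 2| ≤ 2 * v ^ 3 / (a ^ 4 * q ^ 2) := by
    rw [heq, abs_div, abs_of_pos (by positivity : (0:ℝ) < 2 * r * B)]
    calc |N| / (2 * r * B) ≤ (2 * v ^ 3 / (a * r)) / (a ^ 2 * q) := by
          apply div_le_div₀ (by positivity) hNub (by positivity) h2rB
      _ = 2 * v ^ 3 / (a ^ 3 * r * q) := by rw [div_div]; ring_nf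
      _ ≤ 2 * v ^ 3 / (a ^ 4 * q ^ 2) := by
          rw [div_le_div_iff₀ (mul_pos (mul_pos (pow_pos ha0 3) hr0) hq0)
            (mul_pos (pow_pos ha0 4) (pow_pos hq0 2))]
          have hkey : a ^ 4 * q ^ 2 ≤ a ^ 3 * r * q := by
            have h := mul_le_mul_of_nonneg_left haq
              (by positivity : (0:ℝ) ≤ a ^ 3 * q)
            nlinarith only [h]
          nlinarith only [hkey, pow_pos hv0 3]
  have ha21 : a ^ 2 ≤ 1 := by nlinarith only [ha1, ha0]
  have hq21 : (1:ℝ) ≤ q ^ 2 := by nlinarith only [hq1]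
  have hv32 : v ^ 3 ≤ v ^ 2 := by
    nlinarith only [mul_nonneg (sq_nonneg v) (by linarith : (0:ℝ) ≤ 1 - v)]
  have hc : (q - r) / (2 * r) * v ^ 2 ≤ v ^ 2 / (4 * a ^ 2 * q ^ 2) := by
    have h1 : (q - r) / (2 * r) ≤ 1 / (4 * a ^ 2 * q ^ 2) := by
      rw [div_le_div_iff₀ (by linarith : (0:ℝ) < 2 * r)
        (by positivity : (0:ℝ) < 4 * a ^ 2 * q ^ 2)]
      have hx1 : a ^ 2 * q ^ 2 * (q - r) ≤ r ^ 2 * (q - r) :=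
        mul_le_mul_of_nonneg_right ha2q hqr0.le
      have hx2 : 2 * r * (2 * r * (q - r)) ≤ 2 * r * 1 :=
        mul_le_mul_of_nonneg_left h2rqr (by linarith)
      nlinarith only [hx1, hx2]
    calc (q - r) / (2 * r) * v ^ 2 ≤ 1 / (4 * a ^ 2 * q ^ 2) * v ^ 2 :=
        mul_le_mul_of_nonneg_right h1 (sq_nonneg v)
      _ = v ^ 2 / (4 * a ^ 2 * q ^ 2) := by ring
  have hc0 : 0 ≤ (q - r) / (2 * r) * v ^ 2 :=
    mul_nonneg (div_nonneg hqr0.le (by linarith)) (sq_nonneg v)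
  have hu : |(A - B) / B| ≤ 3 * v ^ 2 / (a ^ 4 * q ^ 2) := by
    have h1 : |(A - B) / B| ≤ |(A - B) / B - (q - r) / (2 * r) * v ^ 2|
        + |(q - r) / (2 * r) * v ^ 2| := by
      have h := abs_add_le ((A - B) / B - (q - r) / (2 * r) * v ^ 2) ((q - r) / (2 * r) * v ^ 2)
      simpa using h
    have h2 : |(q - r) / (2 * r) * v ^ 2| ≤ v ^ 2 / (4 * a ^ 2 * q ^ 2) := by
      rw [abs_of_nonneg hc0]; exact hc
    have e1 : 2 * v ^ 3 / (a ^ 4 * q ^ 2) ≤ 2 * v ^ 2 / (a ^ 4 * q ^ 2) :=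
      div_le_div₀ (by positivity) (by linarith only [hv32]) (by positivity) le_rfl
    have e2 : v ^ 2 / (4 * a ^ 2 * q ^ 2) ≤ v ^ 2 / (a ^ 4 * q ^ 2) := by
      apply div_le_div₀ (sq_nonneg v) le_rfl (by positivity)
      nlinarith only [mul_le_mul_of_nonneg_right ha21
        (by positivity : (0:ℝ) ≤ a ^ 2 * q ^ 2), sq_nonneg (a * q)]
    calc |(A - B) / B| ≤ 2 * v ^ 3 / (a ^ 4 * q ^ 2) + v ^ 2 / (4 * a ^ 2 * q ^ 2) := by
          linarith only [h1, h2, hE1]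
      _ ≤ 2 * v ^ 2 / (a ^ 4 * q ^ 2) + v ^ 2 / (a ^ 4 * q ^ 2) := by linarith only [e1, e2]
      _ = 3 * v ^ 2 / (a ^ 4 * q ^ 2) := by ring
  have hu3 : |(A - B) / B| ≤ 1 / 3 := by
    refine hu.trans ?_
    rw [div_le_div_iff₀ (by positivity) (by norm_num : (0:ℝ) < 3)]
    have hv2 : v ^ 2 ≤ (a ^ 2 / 3) ^ 2 := pow_le_pow_left₀ hv0.le hva 2
    have h : a ^ 4 * 1 ≤ a ^ 4 * q ^ 2 := mul_le_mul_of_nonneg_left hq21 (by positivity)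
    nlinarith only [hv2, h]
  obtain ⟨u, hu_def⟩ : ∃ u : ℝ, u = (A - B) / B := ⟨_, rfl⟩
  have hE1' : |u - (q - r) / (2 * r) * v ^ 2| ≤ 2 * v ^ 3 / (a ^ 4 * q ^ 2) := by
    rw [hu_def]; exact hE1
  have hu' : |u| ≤ 3 * v ^ 2 / (a ^ 4 * q ^ 2) := by rw [hu_def]; exact hu
  have hu_lb : -(1/3) ≤ u := by rw [hu_def]; exact (abs_le.mp hu3).1
  have hu_ub : u ≤ 1/3 := by rw [hu_def]; exact (abs_le.mp hu3).2
  have h1u : (0:ℝ) < 1 + u := by linarith only [hu_lb]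
  have hXu : A / B = 1 + u := by rw [hu_def, ← div_sub_one hBne]; ring
  have hlog : |Real.log (A / B) - u| ≤ 2 * u ^ 2 := by
    rw [hXu]
    have hup : Real.log (1 + u) ≤ u := by
      have h := Real.log_le_sub_one_of_pos h1u
      linarith only [h]
    have hlo : u - 2 * u ^ 2 ≤ Real.log (1 + u) := by
      have h2 := Real.log_le_sub_one_of_pos (show (0:ℝ) < (1 + u)⁻¹ by positivity)
      rw [Real.log_inv] at h2
      have h4 : u - 2 * u ^ 2 ≤ 1 - (1 + u)⁻¹ := by
        rw [inv_eq_one_div, ← sub_nonneg]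
        have he : 1 - 1 / (1 + u) - (u - 2 * u ^ 2) = (u ^ 2 + 2 * u ^ 3) / (1 + u) := by
          field_simp
          ring
        rw [he]
        apply div_nonneg ?_ h1u.le
        have hm := mul_nonneg (sq_nonneg u) (by linarith only [hu_lb] : (0:ℝ) ≤ 1 + 2 * u)
        nlinarith only [hm]
      linarith only [h2, h4]
    rw [abs_le]
    constructor
    · linarith only [hlo]
    · linarith only [hup, sq_nonneg u]
  have hANB : hFun q (s1Fun q v) - hFun q (-q + r) = Real.log (A / B) := by
    have e0 : (-q + r + q) / (1 - (-q + r) ^ 2) = 1 / (2 * (q - r)) := by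
      rw [show 1 - (-q + r) ^ 2 = 2 * r * (q - r) by linear_combination hr2]
      rw [show -q + r + q = r by ring]
      rw [div_eq_div_iff (mul_pos (mul_pos two_pos hr0) hqr0).ne'
        (by linarith : (0:ℝ) < 2 * (q - r)).ne']
      ring
    have hs1 : s1Fun q v = (-q + w) / (v + 1) := by rw [s1Fun, ← hw_def]
    have hv1' : v + 1 ≠ 0 := ne_of_gt (by linarith)
    have hnum : s1Fun q v + q = (q * v + w) / (v + 1) := by
      rw [hs1]; field_simp; ring
    have hden : 1 - (s1Fun q v) ^ 2 = 2 * B / (v + 1) ^ 2 := by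
      rw [hs1, hB_def]
      field_simp
      linear_combination 2 * hr2 - hw2
    have harg1 : (s1Fun q v + q) / (1 - (s1Fun q v) ^ 2) = (q * v + w) * (v + 1) / (2 * B) := by
      rw [hnum, hden]
      have h2B : (2:ℝ) * B ≠ 0 := by
        exact mul_ne_zero two_ne_zero hBne
      field_simp
    have hx1 : (q * v + w) * (v + 1) / (2 * B) = (A / B) * (1 / (2 * (q - r))) := by
      rw [hA_def]; field_simp
    have hABne : A / B ≠ 0 := ne_of_gt (div_pos hA0 hB0)
    have h2qrne : 1 / (2 * (q - r)) ≠ 0 := by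
      apply ne_of_gt
      rw [one_div]
      exact inv_pos.mpr (by linarith)
    rw [hFun, hFun, harg1, e0, hx1, Real.log_mul hABne h2qrne]
    ring
  rw [hANB]
  have final : |Real.log (A / B) - (q - r) / (2 * r) * v ^ 2|
      ≤ 2 * u ^ 2 + 2 * v ^ 3 / (a ^ 4 * q ^ 2) := by
    calc |Real.log (A / B) - (q - r) / (2 * r) * v ^ 2|
        ≤ |Real.log (A / B) - u| + |u - (q - r) / (2 * r) * v ^ 2| := abs_sub_le _ _ _
      _ ≤ 2 * u ^ 2 + 2 * v ^ 3 / (a ^ 4 * q ^ 2) := by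
          exact add_le_add hlog hE1'
  refine final.trans ?_
  have hu2 : u ^ 2 ≤ (3 * v ^ 2 / (a ^ 4 * q ^ 2)) ^ 2 := by
    rw [← sq_abs]
    exact pow_le_pow_left₀ (abs_nonneg _) hu' 2
  have hq24 : q ^ 2 ≤ q ^ 4 := by nlinarith only [hq21, pow_pos hq0 2]
  have hv4 : v ^ 4 ≤ v ^ 3 := by
    nlinarith only [mul_nonneg (pow_pos hv0 3).le (by linarith : (0:ℝ) ≤ 1 - v)]
  have ha41 : a ^ 4 ≤ 1 := by nlinarith only [ha21, pow_pos ha0 2]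
  have ha84 : a ^ 8 ≤ a ^ 4 := by nlinarith only [ha41, pow_pos ha0 4]
  have step1 : 2 * u ^ 2 ≤ 18 * v ^ 4 / (a ^ 8 * q ^ 4) := by
    calc 2 * u ^ 2 ≤ 2 * (3 * v ^ 2 / (a ^ 4 * q ^ 2)) ^ 2 := by linarith only [hu2]
      _ = 18 * v ^ 4 / (a ^ 8 * q ^ 4) := by rw [div_pow]; ring
  have step2 : 18 * v ^ 4 / (a ^ 8 * q ^ 4) ≤ 18 * v ^ 3 / (a ^ 8 * q ^ 2) := by
    apply div_le_div₀ (by positivity) (by linarith only [hv4]) (by positivity)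
    have h := mul_le_mul_of_nonneg_left hq24 (by positivity : (0:ℝ) ≤ a ^ 8)
    linarith only [h]
  have step3 : 2 * v ^ 3 / (a ^ 4 * q ^ 2) ≤ 2 * v ^ 3 / (a ^ 8 * q ^ 2) := by
    apply div_le_div₀ (by positivity) le_rfl (by positivity)
    have h := mul_le_mul_of_nonneg_right ha84 (pow_pos hq0 2).le
    linarith only [h]
  calc 2 * u ^ 2 + 2 * v ^ 3 / (a ^ 4 * q ^ 2)
      ≤ 18 * v ^ 3 / (a ^ 8 * q ^ 2) + 2 * v ^ 3 / (a ^ 8 * q ^ 2) := by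
        linarith only [step1.trans step2, step3]
    _ = 20 / a ^ 8 * v ^ 3 / q ^ 2 := by ring
end

section
/- Define for q > 1 the functions h_q(s) = log((s+q)/(1−s²)) (on the domain where the argument is positive) and s₂(q,v) = v − q − √(v²+q²−1). Then for v → 0, h_q(−q − √(q²−1)) − h_q(s₂(q,v)) = ((q − √(q²−1))/(2√(q²−1)))·v² + O(v³/q²), uniformly for q ≥ 1 + η with any fixed η > 0. -/
open Real

/-- `s₂(q,v) = v − q − √(v²+q²−1)`. -/
noncomputable def s2Fun (q v : ℝ) : ℝ := v - q - Real.sqrt (v ^ 2 + q ^ 2 - 1)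

set_option maxHeartbeats 3200000 in
/-- for `q ≥ 1 + η` and `v → 0`,
`h_q(−q−√(q²−1)) − h_q(s₂(q,v)) = ((q−√(q²−1))/(2√(q²−1)))·v² + O(v³/q²)`,
uniformly in `q`. -/
theorem stmt_9 (η : ℝ) (hη : 0 < η) :
    ∃ C > 0, ∃ v₀ > 0, ∀ q : ℝ, 1 + η ≤ q → ∀ v : ℝ, 0 < v → v ≤ v₀ →
      |hFun q (-q - Real.sqrt (q ^ 2 - 1)) - hFun q (s2Fun q v) -
        (q - Real.sqrt (q ^ 2 - 1)) / (2 * Real.sqrt (q ^ 2 - 1)) * v ^ 2|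
        ≤ C * v ^ 3 / q ^ 2 := by
  have hs : (0:ℝ) < 2*η + η^2 := by nlinarith
  set K : ℝ := (1+η)/Real.sqrt (2*η+η^2) with hKdef
  have hsqpos : 0 < Real.sqrt (2*η+η^2) := Real.sqrt_pos.mpr hs
  have hKpos : 0 < K := by positivity
  have hK1 : 1 ≤ K := by
    rw [hKdef, le_div_iff₀ hsqpos, one_mul]
    have : Real.sqrt (2*η+η^2) ≤ Real.sqrt ((1+η)^2) := by
      apply Real.sqrt_le_sqrt; nlinarith
    rwa [Real.sqrt_sq (by positivity)] at this
  refine ⟨K^4/4 + K^3/8 + 1, by positivity, 1, one_pos, ?_⟩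
  intro q hq v hv hv1
  have hq1 : 1 < q := by linarith
  have hq0 : 0 < q := by linarith
  set w : ℝ := Real.sqrt (q^2 - 1) with hwdef
  set r : ℝ := Real.sqrt (v^2 + q^2 - 1) with hrdef
  have hw2 : w^2 = q^2 - 1 := Real.sq_sqrt (by nlinarith)
  have hr2 : r^2 = v^2 + q^2 - 1 := Real.sq_sqrt (by nlinarith)
  have hwpos : 0 < w := Real.sqrt_pos.mpr (by nlinarith)
  have hrpos : 0 < r := Real.sqrt_pos.mpr (by nlinarith)
  have hrv : v < r := by nlinarith
  have hwr : w ≤ r := by nlinarith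
  -- w ≥ q/K, i.e. q ≤ K*w
  have hqKw : q ≤ K * w := by
    rw [hKdef, div_mul_eq_mul_div, le_div_iff₀ hsqpos]
    have h1 : (q * Real.sqrt (2*η+η^2))^2 ≤ ((1+η)*w)^2 := by
      rw [mul_pow, mul_pow, Real.sq_sqrt hs.le, hw2]
      nlinarith
    have h2 : 0 ≤ (1+η)*w := by positivity
    nlinarith [Real.sqrt_nonneg (2*η+η^2)]
  -- value of hFun at s0
  have hA : hFun q (-q - w) = -Real.log (2*(q+w)) := by
    have hden : 1 - (-q-w)^2 = -(2*w*(q+w)) := by linear_combination hw2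
    have harg : (-q - w + q)/(1 - (-q-w)^2) = (2*(q+w))⁻¹ := by
      rw [hden]
      rw [div_eq_iff (ne_of_lt (show -(2*w*(q+w)) < 0 by nlinarith))]
      field_simp
      ring
    simp only [hFun]
    rw [harg, Real.log_inv]
  -- value of hFun at s2
  have hB : hFun q (s2Fun q v) = -Real.log (2*(q+r)) := by
    have hs2 : s2Fun q v = v - q - r := rfl
    have hden : 1 - (v-q-r)^2 = -(2*(q+r)*(r-v)) := by linear_combination hr2
    have hrv' : (0:ℝ) < r - v := by linarith
    have harg : (v - q - r + q)/(1 - (v-q-r)^2) = (2*(q+r))⁻¹ := by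
      rw [hden]
      rw [div_eq_iff (ne_of_lt (show -(2*(q+r)*(r-v)) < 0 by nlinarith))]
      field_simp
      ring
    simp only [hFun, hs2]
    rw [harg, Real.log_inv]
  -- the difference is log(1+x)
  obtain ⟨x, hxdef⟩ : ∃ x : ℝ, x = (r - w)/(q + w) := ⟨_, rfl⟩
  have hqw : 0 < q + w := by linarith
  have hqr : 0 < q + r := by linarith
  have hx0 : 0 ≤ x := by
    rw [hxdef]
    apply div_nonneg <;> linarith
  have hlogdiff : hFun q (-q - w) - hFun q (s2Fun q v) = Real.log (1+x) := by
    rw [hA, hB]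
    have hy : (1:ℝ)+x = (2*(q+r))/(2*(q+w)) := by
      rw [hxdef]; field_simp; ring
    rw [hy, Real.log_div (by positivity) (by positivity)]
    ring
  -- identity for x
  have hx_eq : x * ((r+w)*(q+w)) = v^2 := by
    rw [hxdef, div_mul_eq_mul_div, div_eq_iff hqw.ne']; linear_combination (w+q)*hr2 - (w+q)*hw2
  -- coefficient identity : (q-w)/(2w) * v^2 = v^2/(2w(q+w))
  have h2w : (0:ℝ) < 2*w := by linarith
  have h2wqw : (0:ℝ) < 2*w*(q+w) := mul_pos h2w hqw
  have hcoef : (q - w)/(2*w) * v^2 = v^2 / (2*w*(q+w)) := by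
    rw [div_mul_eq_mul_div, div_eq_div_iff h2w.ne' h2wqw.ne']
    linear_combination (-2)*w*v^2*hw2
  have hq2ge1 : (1:ℝ) ≤ q^2 := by nlinarith
  have hvq2 : v^4*q^2 ≤ v^3*q^4 := by nlinarith [mul_nonneg (mul_nonneg (sq_nonneg q) (pow_nonneg hv.le 3)) (show (0:ℝ) ≤ q^2 - v by linarith)]
  -- bound on x : x ≤ K^2 * v^2 / (2*q^2)
  have hx_le : x ≤ K^2 * v^2 / (2*q^2) := by
    rw [le_div_iff₀ (by positivity)]
    have h2wq : 2*w*q ≤ (r+w)*(q+w) := by nlinarith [mul_nonneg hq0.le (sub_nonneg.mpr hwr), mul_nonneg hwpos.le (by linarith : (0:ℝ) ≤ r + w)]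
    have h3 : x*(2*w*q) ≤ v^2 := by linarith [mul_le_mul_of_nonneg_left h2wq hx0, hx_eq]
    have h4 : q^2 ≤ K^2*(w*q) := by nlinarith [mul_le_mul_of_nonneg_right hqKw hq0.le, mul_le_mul_of_nonneg_right hK1 (mul_nonneg (mul_nonneg hKpos.le hwpos.le) hq0.le)]
    have h5 := mul_le_mul_of_nonneg_left h4 hx0
    have h6 := mul_le_mul_of_nonneg_left h3 (sq_nonneg K)
    linarith [h5, h6]
  -- exact identity for the second-order error
  have hrw2pos : (0:ℝ) < 2*w*(r+w)^2*(q+w) := by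
    apply mul_pos (mul_pos h2w (by positivity)) hqw
  have hdiff_eq : v^2/(2*w*(q+w)) - x = v^4 / (2*w*(r+w)^2*(q+w)) := by
    rw [hxdef, div_sub_div _ _ (ne_of_gt h2wqw) (ne_of_gt hqw), div_eq_div_iff (mul_pos h2wqw hqw).ne' hrw2pos.ne']
    linear_combination (2*w*(q+w)^2*(v^2 - 2*w*(w+r)))*hr2 - (2*w*(q+w)^2*(v^2 - 2*w*(w+r)))*hw2
  have hdiff_le : v^2/(2*w*(q+w)) - x ≤ K^3/8 * v^3 / q^2 := by
    rw [hdiff_eq, div_le_div_iff₀ hrw2pos (by positivity)]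
    have hw3 : q^3 ≤ K^3*w^3 := by
      calc q^3 = q^3 := rfl
        _ ≤ (K*w)^3 := pow_le_pow_left₀ hq0.le hqKw 3
        _ = K^3*w^3 := by ring
    have h1 : (0:ℝ) ≤ K^3*w*(q+w) := by positivity
    have hr4 : 4*w^2 ≤ (r+w)^2 := by nlinarith [mul_nonneg hwpos.le (sub_nonneg.mpr hwr)]
    have h2 := mul_le_mul_of_nonneg_left hr4 h1
    have h3 := mul_le_mul_of_nonneg_right hw3 hq0.le
    have h4 : (0:ℝ) ≤ K^3*w^3*w := by positivity
    have hE : 8*q^4 ≤ K^3*(2*w*(r+w)^2*(q+w)) := by linarith [h2, h3, h4]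
    have h5 := mul_le_mul_of_nonneg_left hE (by positivity : (0:ℝ) ≤ v^3/8)
    linarith [h5, hvq2]
  have hdiff_ge : 0 ≤ v^2/(2*w*(q+w)) - x := by
    rw [hdiff_eq]; positivity
  -- log bounds
  have h1x : (0:ℝ) < 1 + x := by linarith
  have hlog_up : Real.log (1+x) ≤ x := by
    have h := Real.log_le_sub_one_of_pos h1x; linarith
  have hlog_lo : x - x^2 ≤ Real.log (1+x) := by
    have h := Real.log_le_sub_one_of_pos (x := (1+x)⁻¹) (by positivity)
    rw [Real.log_inv] at h
    have h3 : (1+x)⁻¹ - 1 = -(x/(1+x)) := by field_simp; ring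
    have h4 : x - x^2 ≤ x/(1+x) := by
      rw [le_div_iff₀ h1x]; linarith [pow_nonneg hx0 3]
    linarith [h3 ▸ h]
  -- x² bound
  have hx2 : x^2 ≤ K^4/4 * v^3 / q^2 := by
    have h1 : x*x ≤ (K^2 * v^2 / (2*q^2))*(K^2 * v^2 / (2*q^2)) := mul_self_le_mul_self hx0 hx_le
    have h2 : (K^2 * v^2 / (2*q^2))^2 ≤ K^4/4 * v^3 / q^2 := by
      rw [div_pow, div_le_div_iff₀ (by positivity) (by positivity)]
      linarith [mul_le_mul_of_nonneg_left hvq2 (pow_nonneg hKpos.le 4)]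
    linarith [h1, h2]
  -- final
  rw [hlogdiff, hcoef]
  rw [abs_le]
  constructor
  · have : Real.log (1+x) - v^2/(2*w*(q+w)) ≥ -(x^2) - (v^2/(2*w*(q+w)) - x) := by linarith
    have hC : x^2 + (v^2/(2*w*(q+w)) - x) ≤ (K^4/4 + K^3/8 + 1) * v^3 / q^2 := by
      have hvq : (0:ℝ) ≤ v^3/q^2 := by positivity
      have e1 : K^4/4 * v^3 / q^2 = (K^4/4) * (v^3/q^2) := by ring
      have e2 : K^3/8 * v^3 / q^2 = (K^3/8) * (v^3/q^2) := by ring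
      have e3 : (K^4/4 + K^3/8 + 1) * v^3 / q^2 = (K^4/4 + K^3/8 + 1) * (v^3/q^2) := by ring
      linarith [hx2, hdiff_le, hvq]
    linarith
  · have hC : v^2/(2*w*(q+w)) - x ≥ 0 := hdiff_ge
    have : Real.log (1+x) - v^2/(2*w*(q+w)) ≤ 0 := by linarith
    have : (0:ℝ) ≤ (K^4/4 + K^3/8 + 1) * v^3 / q^2 := by positivity
    linarith
end

section
/- Let D > 0 be square-free, fix ideal class representatives with bases giving integer matrices B_{l1}, B_{l2} via β̄_{li}·β_{lj} = b_{lij1}√D + b_{lij2}, and set B_l = [[b_{l111}, b_{l211}],[b_{l121}, b_{l221}]]. Then B_l ∈ GL(2, ℤ), i.e. det B_l = ±1. -/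
open Matrix

/-- The order `ℤ[√D]` viewed as a ℤ-submodule of ℝ (spanned by `1` and `√D`). -/
noncomputable def orderZsqrtd (D : ℤ) : Submodule ℤ ℝ :=
  Submodule.span ℤ ({1, Real.sqrt D} : Set ℝ)

/-- let `D > 0` be squarefree with `D ≢ 1 (mod 4)`, let `{β₁, β₂}` be a
ℤ-basis of a fractional ideal `I` of `ℤ[√D]` and `{β̄₁, β̄₂}` a ℤ-basis of `I⁻¹`
(so that `I⁻¹·I = ℤ[√D]` and both are modules over `ℤ[√D]`), and let the integers
`b i j k` be defined by `β̄ᵢ·βⱼ = (b i j 0)·√D + (b i j 1)`.  Then the matrix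
`B = [[b₁₁₁, b₂₁₁],[b₁₂₁, b₂₂₁]]` of `√D`-coefficients lies in `GL(2,ℤ)`,
i.e. `det B = ±1`. -/
theorem stmt_13 (D : ℤ) (hD : 0 < D) (hsf : Squarefree D) (hmod : D % 4 ≠ 1)
    (β β' : Fin 2 → ℝ)
    (b : Fin 2 → Fin 2 → Fin 2 → ℤ)
    -- `I = span β` and `I⁻¹ = span β'` are modules over `ℤ[√D]`
    (hI : orderZsqrtd D * Submodule.span ℤ (Set.range β) ≤ Submodule.span ℤ (Set.range β))
    (hI' : orderZsqrtd D * Submodule.span ℤ (Set.range β') ≤ Submodule.span ℤ (Set.range β'))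
    -- `I⁻¹ · I = ℤ[√D]`
    (hII : Submodule.span ℤ (Set.range β') * Submodule.span ℤ (Set.range β) = orderZsqrtd D)
    -- the bases are ℤ-linearly independent
    (hβ : LinearIndependent ℤ β) (hβ' : LinearIndependent ℤ β')
    -- definition of the integers `b i j k`
    (hb : ∀ i j : Fin 2, β' i * β j = (b i j 0 : ℝ) * Real.sqrt D + (b i j 1 : ℝ)) :
    (!![b 0 0 0, b 1 0 0; b 0 1 0, b 1 1 0] : Matrix (Fin 2) (Fin 2) ℤ).det = 1 ∨
    (!![b 0 0 0, b 1 0 0; b 0 1 0, b 1 1 0] : Matrix (Fin 2) (Fin 2) ℤ).det = -1 := by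
  by_contra hcon
  push_neg at hcon
  obtain ⟨h1, h2⟩ := hcon
  set d : ℤ := (!![b 0 0 0, b 1 0 0; b 0 1 0, b 1 1 0] : Matrix (Fin 2) (Fin 2) ℤ).det with hd
  have hdet : d = b 0 0 0 * b 1 1 0 - b 1 0 0 * b 0 1 0 := by
    simp [hd, Matrix.det_fin_two_of]
  -- √D is irrational
  have hD1 : D ≠ 1 := by rintro rfl; exact hmod rfl
  have hirr : Irrational (Real.sqrt D) := by
    rw [irrational_sqrt_intCast_iff]
    refine ⟨fun ⟨r, hr⟩ => ?_, hD.le⟩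
    have hu : IsUnit r := hsf r (by rw [hr])
    rcases Int.isUnit_iff.mp hu with h | h <;> simp [h] at hr <;> exact hD1 hr
  -- uniqueness of coefficients
  have huniq : ∀ a c : ℤ, (a : ℝ) * Real.sqrt D + c = 0 → a = 0 ∧ c = 0 := by
    intro a c h
    rcases eq_or_ne a 0 with ha | ha
    · refine ⟨ha, ?_⟩
      subst ha; simpa using h
    · exfalso
      have : Irrational ((a : ℝ) * Real.sqrt D + c) := (hirr.intCast_mul ha).add_intCast c
      rw [h] at this
      exact this.ne_int 0 (by simp)
  -- a prime dividing the determinant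
  obtain ⟨p, hp, hpd⟩ : ∃ p : ℕ, p.Prime ∧ (p : ℤ) ∣ d := by
    rcases eq_or_ne d 0 with h0 | h0
    · exact ⟨2, Nat.prime_two, h0 ▸ dvd_zero 2⟩
    · refine ⟨d.natAbs.minFac, Nat.minFac_prime ?_, ?_⟩
      · intro h
        rcases Int.natAbs_eq_iff.mp h with h' | h'
        · exact h1 (by simpa using h')
        · exact h2 (by simpa using h')
      · exact dvd_trans (Int.natCast_dvd_natCast.mpr d.natAbs.minFac_dvd) (Int.natAbs_dvd.mpr dvd_rfl)
  have hp0 : (p : ℝ) ≠ 0 := by exact_mod_cast hp.ne_zero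
  have hpnot1 : ¬ (p : ℤ) ∣ 1 := by
    intro h
    have h2 : p ∣ 1 := by exact_mod_cast h
    exact hp.ne_one (Nat.dvd_one.mp h2)
  -- a kernel vector mod p that is not ≡ 0 mod p
  obtain ⟨x, y, hk0, hk1, hxy⟩ :
      ∃ x y : ℤ, ((p:ℤ) ∣ x * b 0 0 0 + y * b 1 0 0) ∧ ((p:ℤ) ∣ x * b 0 1 0 + y * b 1 1 0) ∧
        ¬ ((p:ℤ) ∣ x ∧ (p:ℤ) ∣ y) := by
    by_cases hv1 : (p:ℤ) ∣ b 1 1 0 ∧ (p:ℤ) ∣ b 0 1 0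
    · by_cases hv2 : (p:ℤ) ∣ b 1 0 0 ∧ (p:ℤ) ∣ b 0 0 0
      · exact ⟨1, 0, by simpa using hv2.2, by simpa using hv1.2, fun h => hpnot1 h.1⟩
      · refine ⟨-(b 1 0 0), b 0 0 0, ⟨0, by ring⟩, ?_, ?_⟩
        · have : -(b 1 0 0) * b 0 1 0 + b 0 0 0 * b 1 1 0 = d := by rw [hdet]; ring
          rw [this]; exact hpd
        · intro ⟨ha, hb⟩; exact hv2 ⟨(dvd_neg.mp ha), hb⟩
    · refine ⟨b 1 1 0, -(b 0 1 0), ?_, ⟨0, by ring⟩, ?_⟩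
      · have : b 1 1 0 * b 0 0 0 + -(b 0 1 0) * b 1 0 0 = d := by rw [hdet]; ring
        rw [this]; exact hpd
      · intro ⟨ha, hb⟩; exact hv1 ⟨ha, dvd_neg.mp hb⟩
  -- the element ξ = x β'₀ + y β'₁ and the coefficients of ξ βⱼ
  set ξ : ℝ := (x : ℝ) * β' 0 + (y : ℝ) * β' 1 with hξ
  set m : Fin 2 → ℤ := fun j => x * b 0 j 0 + y * b 1 j 0 with hm
  set n : Fin 2 → ℤ := fun j => x * b 0 j 1 + y * b 1 j 1 with hn
  have hmul : ∀ j, ξ * β j = (m j : ℝ) * Real.sqrt D + (n j : ℝ) := by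
    intro j
    have h0 := hb 0 j
    have h1 := hb 1 j
    simp only [hξ, hm, hn]
    push_cast
    linear_combination (x : ℝ) * h0 + (y : ℝ) * h1
  -- √D ∈ order, and √D • (span β) ⊆ span β
  have hsqrt_mem : Real.sqrt D ∈ orderZsqrtd D :=
    Submodule.subset_span (by simp)
  have hone_mem : (1 : ℝ) ∈ orderZsqrtd D :=
    Submodule.subset_span (by simp)
  have hsqβ : ∀ j, ∃ N : Fin 2 → ℤ,
      Real.sqrt D * β j = (N 0 : ℝ) * β 0 + (N 1 : ℝ) * β 1 := by
    intro j
    have hj : β j ∈ Submodule.span ℤ (Set.range β) := Submodule.subset_span ⟨j, rfl⟩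
    have : Real.sqrt D * β j ∈ Submodule.span ℤ (Set.range β) :=
      hI (Submodule.mul_mem_mul hsqrt_mem hj)
    obtain ⟨N, hN⟩ := (Submodule.mem_span_range_iff_exists_fun ℤ).mp this
    refine ⟨N, ?_⟩
    rw [← hN, Fin.sum_univ_two]
    push_cast [zsmul_eq_mul]
    ring
  -- p divides m j by construction
  have hpm : ∀ j, (p:ℤ) ∣ m j := by
    intro j
    fin_cases j
    · exact hk0
    · exact hk1
  -- key step: p also divides n j
  have hpn : ∀ j, (p:ℤ) ∣ n j := by
    intro j
    obtain ⟨N, hN⟩ := hsqβ j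
    -- compute √D (ξ βⱼ) two ways
    have key : ((n j - (N 0 * m 0 + N 1 * m 1) : ℤ) : ℝ) * Real.sqrt D +
        ((D * m j - (N 0 * n 0 + N 1 * n 1) : ℤ) : ℝ) = 0 := by
      have e1 : Real.sqrt D * (ξ * β j) = (m j : ℝ) * D + (n j : ℝ) * Real.sqrt D := by
        rw [hmul j]
        have : Real.sqrt D * Real.sqrt D = (D : ℝ) :=
          Real.mul_self_sqrt (by exact_mod_cast hD.le)
        linear_combination (m j : ℝ) * this
      have e2 : Real.sqrt D * (ξ * β j) =
          (N 0 : ℝ) * ((m 0 : ℝ) * Real.sqrt D + (n 0 : ℝ)) +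
          (N 1 : ℝ) * ((m 1 : ℝ) * Real.sqrt D + (n 1 : ℝ)) := by
        calc Real.sqrt D * (ξ * β j) = ξ * (Real.sqrt D * β j) := by ring
          _ = ξ * ((N 0 : ℝ) * β 0 + (N 1 : ℝ) * β 1) := by rw [hN]
          _ = (N 0 : ℝ) * (ξ * β 0) + (N 1 : ℝ) * (ξ * β 1) := by ring
          _ = _ := by rw [hmul 0, hmul 1]
      push_cast
      linear_combination e2 - e1
    obtain ⟨hA, _⟩ := huniq _ _ key
    have : n j = N 0 * m 0 + N 1 * m 1 := by omega
    rw [this]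
    exact dvd_add (Dvd.dvd.mul_left (hpm 0) _) (Dvd.dvd.mul_left (hpm 1) _)
  -- therefore (ξ/p)·βⱼ ∈ ℤ[√D]
  set ζ : ℝ := ξ / p with hζ
  have hζβ : ∀ j, ζ * β j ∈ orderZsqrtd D := by
    intro j
    obtain ⟨m', hm'⟩ := hpm j
    obtain ⟨n', hn'⟩ := hpn j
    have hmul' : ζ * β j = (m' : ℝ) * Real.sqrt D + (n' : ℝ) := by
      rw [hζ, div_mul_eq_mul_div, hmul j, hm', hn']
      push_cast
      field_simp
    rw [show ζ * β j = (n' : ℤ) • (1:ℝ) + (m' : ℤ) • Real.sqrt D by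
      rw [hmul']; simp [zsmul_eq_mul]; ring]
    exact Submodule.add_mem _ (Submodule.smul_mem _ _ hone_mem)
      (Submodule.smul_mem _ _ hsqrt_mem)
  -- hence ζ ∈ span β'
  have hζall : ∀ z ∈ Submodule.span ℤ (Set.range β), ζ * z ∈ orderZsqrtd D := by
    intro z hz
    have : Submodule.span ℤ (Set.range β) ≤
        (orderZsqrtd D).comap (LinearMap.mulLeft ℤ ζ) := by
      rw [Submodule.span_le]
      rintro _ ⟨j, rfl⟩
      exact hζβ j
    exact this hz
  have hζmem : ζ ∈ Submodule.span ℤ (Set.range β') := by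
    have h1mem : (1 : ℝ) ∈
        Submodule.span ℤ (Set.range β') * Submodule.span ℤ (Set.range β) := by
      rw [hII]; exact hone_mem
    have hle : Submodule.span ℤ (Set.range β') * Submodule.span ℤ (Set.range β) ≤
        (Submodule.span ℤ (Set.range β')).comap (LinearMap.mulLeft ℤ ζ) := by
      rw [Submodule.mul_le]
      intro a ha z hz
      have : ζ * (a * z) = (ζ * z) * a := by ring
      simp only [Submodule.mem_comap, LinearMap.mulLeft_apply, this]
      exact hI' (Submodule.mul_mem_mul (hζall z hz) ha)
    have := hle h1mem
    simpa using this
  -- write ζ in the basis β' and derive the contradiction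
  obtain ⟨e, he⟩ := (Submodule.mem_span_range_iff_exists_fun ℤ).mp hζmem
  have hrel : ∑ i, (![x - p * e 0, y - p * e 1] i) • β' i = 0 := by
    have hpξ : (p : ℝ) * ζ = ξ := by rw [hζ]; field_simp
    rw [Fin.sum_univ_two]
    have he' : (e 0 : ℝ) * β' 0 + (e 1 : ℝ) * β' 1 = ζ := by
      rw [← he, Fin.sum_univ_two]; push_cast [zsmul_eq_mul]; ring
    push_cast [zsmul_eq_mul, Matrix.cons_val_zero, Matrix.cons_val_one, Matrix.head_cons]
    have : (p:ℝ) * ((e 0 : ℝ) * β' 0 + (e 1 : ℝ) * β' 1) = (x:ℝ) * β' 0 + (y:ℝ) * β' 1 := by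
      rw [he', hpξ, hξ]
    linear_combination -this
  have hzero := Fintype.linearIndependent_iff.mp hβ' _ hrel
  have hx0 := hzero 0
  have hy0 := hzero 1
  simp at hx0 hy0
  exact hxy ⟨⟨e 0, by omega⟩, ⟨e 1, by omega⟩⟩
end

section
/- Let D be square-free with D ≢ 1 (mod 4), n ≥ 1, and ν a fixed residue mod n with ν² ≡ D (mod n). Suppose m₁, m₂ are positive integers with m₁ ≡ m₂ ≡ 0 (mod n), and μ₁, μ₂ are integers with μᵢ² ≡ D (mod mᵢ) and μ₁ ≡ μ₂ ≡ ν (mod n). If there exist γ ∈ SL(2,ℤ) and a totally positive ξ ∈ ℚ(√D) such that [[1, μ₁],[0, m₁]]·M·diag(ξ⁽¹⁾, ξ⁽²⁾) = γ·[[1, μ₂],[0, m₂]]·M, where M = [[√D, −√D],[1, 1]], then γ ∈ Γ₀(n). -/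
open Matrix MatrixGroups

/-- The matrix `M = [[√D, −√D],[1, 1]]`. -/
noncomputable def Mmat (D : ℤ) : Matrix (Fin 2) (Fin 2) ℝ :=
  !![Real.sqrt D, -Real.sqrt D; 1, 1]

/-- The real matrix of an integral matrix. -/
def toRealMat (γ : SL(2, ℤ)) : Matrix (Fin 2) (Fin 2) ℝ :=
  γ.1.map ((↑) : ℤ → ℝ)

private lemma odd_sq_mod4 (X : ℤ) (h : ¬ 2 ∣ X) : (4:ℤ) ∣ X^2 - 1 := by
  obtain ⟨c, hc⟩ : ∃ c, X = 2*c + 1 := ⟨(X-1)/2, by omega⟩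
  exact ⟨c^2 + c, by rw [hc]; ring⟩

/-- The arithmetic core: from the quadratic identity `X² - D r² = m₁ m₂` and the
congruences, conclude `n ∣ r`. -/
private lemma core_lemma (D n ν μ₁ m₁ m₂ p r X : ℤ)
    (hsf : Squarefree D) (hmod : D % 4 ≠ 1)
    (hnm₁ : n ∣ m₁) (hnm₂ : n ∣ m₂)
    (hνD : n ∣ D - ν ^ 2) (hμν₁ : n ∣ μ₁ - ν)
    (h2νr : n ∣ 2 * ν * r)
    (hX : X = m₁ * p - μ₁ * r)
    (hXsq : X ^ 2 - D * r ^ 2 = m₁ * m₂) : n ∣ r := by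
  rw [← Int.natAbs_dvd_natAbs, Nat.dvd_iff_prime_pow_dvd_dvd]
  intro P k hP hPk
  have hP' : P.Prime := by first | exact hP | exact Nat.prime_iff.mpr hP
  have hπ : Prime ((P : ℤ)) := Nat.prime_iff_prime_int.mp hP'
  have hπn : ((P:ℤ)) ^ k ∣ n := by
    have h1 : ((P:ℤ)) ^ k ∣ (n.natAbs : ℤ) := by exact_mod_cast hPk
    exact h1.trans (Int.natAbs_dvd.mpr dvd_rfl)
  suffices h : ((P:ℤ)) ^ k ∣ r by
    have h1 : ((P:ℤ)) ^ k ∣ (r.natAbs : ℤ) := Int.dvd_natAbs.mpr h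
    exact_mod_cast h1
  rcases Nat.eq_zero_or_pos k with hk0 | hkpos
  · simp [hk0]
  have hπdvdn : (P:ℤ) ∣ n := (dvd_pow_self _ hkpos.ne').trans hπn
  have hπm₁ : (P:ℤ) ∣ m₁ := hπdvdn.trans hnm₁
  have hπm₂ : (P:ℤ) ∣ m₂ := hπdvdn.trans hnm₂
  by_cases hπν : (P:ℤ) ∣ ν
  · -- π divides ν, hence D; then k = 1 and a valuation argument works
    have hπD : (P:ℤ) ∣ D := by
      have h1 : (P:ℤ) ∣ D - ν ^ 2 := hπdvdn.trans hνD
      have h2 : (P:ℤ) ∣ ν ^ 2 := hπν.pow (by norm_num)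
      have h3 : D = (D - ν ^ 2) + ν ^ 2 := by ring
      rw [h3]; exact dvd_add h1 h2
    have hk1 : k = 1 := by
      by_contra hk
      have hk2 : 2 ≤ k := by omega
      have h2n : (P:ℤ) ^ 2 ∣ n := (pow_dvd_pow _ hk2).trans hπn
      have h2D : (P:ℤ) ^ 2 ∣ D := by
        have h1 : (P:ℤ) ^ 2 ∣ D - ν ^ 2 := h2n.trans hνD
        have h2 : (P:ℤ) ^ 2 ∣ ν ^ 2 := pow_dvd_pow_of_dvd hπν 2
        have h3 : D = (D - ν ^ 2) + ν ^ 2 := by ring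
        rw [h3]; exact dvd_add h1 h2
      exact hπ.not_unit (hsf _ (by rwa [← sq]))
    rw [hk1, pow_one]
    have hXsq' : X ^ 2 = m₁ * m₂ + D * r ^ 2 := by linarith
    have hπX2 : (P:ℤ) ∣ X ^ 2 := by
      rw [hXsq']; exact dvd_add (hπm₁.mul_right _) (hπD.mul_right _)
    have hπX : (P:ℤ) ∣ X := hπ.dvd_of_dvd_pow hπX2
    have h2Dr : (P:ℤ) ^ 2 ∣ D * r ^ 2 := by
      have h3 : D * r ^ 2 = X ^ 2 - m₁ * m₂ := by linarith
      rw [h3]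
      exact dvd_sub (pow_dvd_pow_of_dvd hπX 2) (by rw [sq]; exact mul_dvd_mul hπm₁ hπm₂)
    obtain ⟨e, he⟩ := hπD
    have hπe : ¬ (P:ℤ) ∣ e := by
      intro hc
      obtain ⟨f, hf⟩ := hc
      exact hπ.not_unit (hsf _ ⟨f, by rw [he, hf]; ring⟩)
    have hπer : (P:ℤ) ∣ e * r ^ 2 := by
      have h2 : (P:ℤ) * (P:ℤ) ∣ (P:ℤ) * (e * r ^ 2) := by
        have h3 : (P:ℤ) * (e * r ^ 2) = D * r ^ 2 := by rw [he]; ring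
        rw [h3, ← sq]; exact h2Dr
      exact (mul_dvd_mul_iff_left hπ.ne_zero).mp h2
    have hπr2 : (P:ℤ) ∣ r ^ 2 := (hπ.dvd_mul.mp hπer).resolve_left hπe
    exact hπ.dvd_of_dvd_pow hπr2
  · by_cases hπ2 : P = 2
    · -- π = 2, ν odd; then k = 1 and a mod 4 argument works
      have h2 : ((P:ℤ)) = 2 := by rw [hπ2]; norm_num
      rw [h2] at hπν hπm₁ hπm₂ hπdvdn hπn ⊢
      have hk1 : k = 1 := by
        by_contra hk
        have hk2 : 2 ≤ k := by omega
        have h4n : (4:ℤ) ∣ n := by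
          have h5 := (pow_dvd_pow (2:ℤ) hk2).trans hπn
          norm_num at h5; exact_mod_cast h5
        have h4 : (4:ℤ) ∣ D - 1 := by
          have h1 : (4:ℤ) ∣ D - ν ^ 2 := h4n.trans hνD
          have h6 : (4:ℤ) ∣ ν ^ 2 - 1 := odd_sq_mod4 ν hπν
          have h3 : D - 1 = (D - ν ^ 2) + (ν ^ 2 - 1) := by ring
          rw [h3]; exact dvd_add h1 h6
        omega
      rw [hk1, pow_one]
      by_contra hrodd
      have hμodd : ¬ (2:ℤ) ∣ μ₁ := by
        have h1 : (2:ℤ) ∣ μ₁ - ν := hπdvdn.trans hμν₁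
        omega
      have hXodd : ¬ (2:ℤ) ∣ X := by
        intro hc
        have hμr : (2:ℤ) ∣ μ₁ * r := by
          have h3 : μ₁ * r = m₁ * p - X := by rw [hX]; ring
          rw [h3]; exact dvd_sub (hπm₁.mul_right _) hc
        rcases Int.prime_two.dvd_mul.mp hμr with h | h
        · exact hμodd h
        · exact hrodd h
      have h4X : (4:ℤ) ∣ X ^ 2 - 1 := odd_sq_mod4 X hXodd
      have h4r : (4:ℤ) ∣ r ^ 2 - 1 := odd_sq_mod4 r hrodd
      have h4m : (4:ℤ) ∣ m₁ * m₂ := by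
        obtain ⟨u, hu⟩ := hπm₁; obtain ⟨v, hv⟩ := hπm₂
        exact ⟨u * v, by rw [hu, hv]; ring⟩
      have h4 : (4:ℤ) ∣ D - 1 := by
        have h3 : D - 1 = (X ^ 2 - 1) - D * (r ^ 2 - 1) - m₁ * m₂ := by linarith
        rw [h3]
        exact dvd_sub (dvd_sub h4X (h4r.mul_left D)) h4m
      omega
    · -- π odd, π ∤ ν : use coprimality with 2ν
      have hπ2' : ¬ (P:ℤ) ∣ 2 := by
        intro hc
        have hc' : P ∣ 2 := by exact_mod_cast hc
        exact hπ2 ((Nat.prime_dvd_prime_iff_eq hP' Nat.prime_two).mp hc')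
      have hcop : IsCoprime ((P:ℤ)) (2 * ν) := by
        rw [hπ.coprime_iff_not_dvd]
        intro hc
        rcases hπ.dvd_mul.mp hc with h | h
        · exact hπ2' h
        · exact hπν h
      have hcopk : IsCoprime (((P:ℤ)) ^ k) (2 * ν) := hcop.pow_left
      have hdvd : ((P:ℤ)) ^ k ∣ (2 * ν) * r := hπn.trans h2νr
      exact hcopk.dvd_of_dvd_mul_left hdvd

/-- with `D` squarefree, `D ≢ 1 (mod 4)`, `D > 0`, a fixed root `ν mod n`,
roots `μ₁ mod m₁`, `μ₂ mod m₂` with `n ∣ mᵢ` and `μᵢ ≡ ν (mod n)`, if there are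
`γ ∈ SL(2,ℤ)` and a totally positive `ξ ∈ ℚ(√D)` with
`[[1,μ₁],[0,m₁]]·M·diag(ξ⁽¹⁾,ξ⁽²⁾) = γ·[[1,μ₂],[0,m₂]]·M`, then `γ ∈ Γ₀(n)`. -/
theorem stmt_14 (D : ℤ) (hDpos : 0 < D) (hsf : Squarefree D) (hmod : D % 4 ≠ 1)
    (n : ℤ) (hn : 0 < n) (ν : ℤ) (hν : ν ^ 2 ≡ D [ZMOD n])
    (m₁ m₂ μ₁ μ₂ : ℤ) (hm₁ : 0 < m₁) (hm₂ : 0 < m₂)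
    (hμ₁ : μ₁ ^ 2 ≡ D [ZMOD m₁]) (hμ₂ : μ₂ ^ 2 ≡ D [ZMOD m₂])
    (hn₁ : n ∣ m₁) (hn₂ : n ∣ m₂)
    (hν₁ : μ₁ ≡ ν [ZMOD n]) (hν₂ : μ₂ ≡ ν [ZMOD n])
    (γ : SL(2, ℤ))
    -- ξ = a + b√D ∈ ℚ(√D), totally positive, with real embeddings ξ⁽¹⁾, ξ⁽²⁾
    (a b : ℚ) (ξ₁ ξ₂ : ℝ)
    (hξ₁ : ξ₁ = (a : ℝ) + (b : ℝ) * Real.sqrt D)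
    (hξ₂ : ξ₂ = (a : ℝ) - (b : ℝ) * Real.sqrt D)
    (hpos₁ : 0 < ξ₁) (hpos₂ : 0 < ξ₂)
    (heq : (!![1, (μ₁ : ℝ); 0, (m₁ : ℝ)] : Matrix (Fin 2) (Fin 2) ℝ) * Mmat D *
        Matrix.diagonal ![ξ₁, ξ₂] =
      toRealMat γ * !![1, (μ₂ : ℝ); 0, (m₂ : ℝ)] * Mmat D) :
    n ∣ γ.1 1 0 := by
  have hDR : (0:ℝ) ≤ (D:ℝ) := by exact_mod_cast hDpos.le
  have hs2 : Real.sqrt D ^ 2 = (D:ℝ) := Real.sq_sqrt hDR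
  have hs0 : 0 < Real.sqrt D := Real.sqrt_pos.mpr (by exact_mod_cast hDpos)
  set s : ℝ := Real.sqrt D with hs
  set p := γ.1 0 0 with hp
  set q := γ.1 0 1 with hq
  set r := γ.1 1 0 with hr
  set t := γ.1 1 1 with ht
  have h00 := congrFun (congrFun heq 0) 0
  have h01 := congrFun (congrFun heq 0) 1
  have h10 := congrFun (congrFun heq 1) 0
  have h11 := congrFun (congrFun heq 1) 1
  simp [Mmat, toRealMat, Matrix.mul_apply, Fin.sum_univ_two] at h00 h01 h10 h11
  rw [← hs] at h00 h01 h10 h11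
  rw [hξ₁] at h00 h10
  rw [hξ₂] at h01 h11
  rw [← hp, ← hq] at h00 h01
  rw [← hr, ← ht] at h10 h11
  -- coefficient extraction
  have h2s : (2:ℝ) * s ≠ 0 := by positivity
  have e1 : (m₁:ℝ) * b = r := by
    have h : ((m₁:ℝ) * b - r) * (2 * s) = 0 := by linear_combination h10 - h11
    rcases mul_eq_zero.mp h with h | h
    · linarith
    · exact absurd h h2s
  have e2 : (m₁:ℝ) * a = r * μ₂ + t * m₂ := by linear_combination (h10 + h11) / 2
  have e3 : (a:ℝ) + μ₁ * b = p := by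
    have h : ((a:ℝ) + μ₁ * b - p) * (2 * s) = 0 := by linear_combination h00 - h01
    rcases mul_eq_zero.mp h with h | h
    · linarith
    · exact absurd h h2s
  have e4 : (b:ℝ) * D + μ₁ * a = p * μ₂ + q * m₂ := by
    linear_combination (h00 + h01) / 2 - (b:ℝ) * hs2
  have rI1 : (m₁:ℝ) * p = r * (μ₁ + μ₂) + t * m₂ := by
    linear_combination (-(m₁:ℝ)) * e3 + e2 + (μ₁:ℝ) * e1
  have rI2 : (m₁:ℝ) * (p * μ₂ + q * m₂) = r * D + μ₁ * (r * μ₂ + t * m₂) := by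
    linear_combination (-(m₁:ℝ)) * e4 + (D:ℝ) * e1 + (μ₁:ℝ) * e2
  have hI1 : m₁ * p = r * (μ₁ + μ₂) + t * m₂ := by exact_mod_cast rI1
  have hI2 : m₁ * (p * μ₂ + q * m₂) = r * D + μ₁ * (r * μ₂ + t * m₂) := by exact_mod_cast rI2
  have hdet : p * t - q * r = 1 := by
    have h := γ.2
    rw [Matrix.det_fin_two] at h
    exact h
  have hXe : m₁ * p - μ₁ * r = r * μ₂ + t * m₂ := by linear_combination hI1
  have hqe : m₁ * m₂ * q = r * D - μ₂ * (m₁ * p - μ₁ * r) + μ₁ * t * m₂ := by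
    linear_combination hI2
  have hXsq : (m₁ * p - μ₁ * r) ^ 2 - D * r ^ 2 = m₁ * m₂ := by
    linear_combination (m₁ * p - μ₁ * r) * hXe + r * hqe + m₁ * m₂ * hdet
  have hνD : n ∣ D - ν ^ 2 := Int.ModEq.dvd hν
  have hμν₁ : n ∣ ν - μ₁ := Int.ModEq.dvd hν₁
  have hμν₂ : n ∣ ν - μ₂ := Int.ModEq.dvd hν₂
  have h2νr : n ∣ 2 * ν * r := by
    have hd : 2 * ν * r = (m₁ * p - t * m₂) + r * (ν - μ₁) + r * (ν - μ₂) := by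
      linear_combination -hI1
    rw [hd]
    exact dvd_add (dvd_add (dvd_sub (hn₁.mul_right _) (hn₂.mul_left _))
      (hμν₁.mul_left _)) (hμν₂.mul_left _)
  have hμν₁' : n ∣ μ₁ - ν := by
    rw [show μ₁ - ν = -(ν - μ₁) by ring]
    exact dvd_neg.mpr hμν₁
  exact core_lemma D n ν μ₁ m₁ m₂ p r (m₁ * p - μ₁ * r) hsf hmod hn₁ hn₂ hνD
    hμν₁' h2νr rfl hXsq
end

section
/- Let D > 0 be square-free with D ≢ 1 (mod 4), n ≥ 1, and ε₀ > 1 the generator of the totally positive units of ℤ[√D]. Let γ_l ∈ SL(2,ℤ) and 𝔅_l be as in the congruence parametrization, so that γ_l·𝔅_l·diag(ξ⁽¹⁾, ξ⁽²⁾) = [[1, μ],[0, m]]·[[√D, −√D],[1,1]] for some totally positive ξ, with m ≡ 0 (mod n). Then γ_l·𝔅_l·diag(ε₀, ε₀⁻¹)·𝔅_l⁻¹·γ_l⁻¹ ∈ Γ₀(n); in fact it lies in Γ₀(m). -/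
open Matrix MatrixGroups

/-- let `D > 0` be squarefree, `D ≢ 1 (mod 4)`, and `ε₀ = e₁ + e₂√D > 1` a
totally positive unit of `ℤ[√D]` (so `e₁ − e₂√D = ε₀⁻¹`).  If
`γ_l·𝔅_l·diag(ξ⁽¹⁾,ξ⁽²⁾) = [[1,μ],[0,m]]·[[√D,−√D],[1,1]]` with `ξ` totally positive,
`μ² ≡ D (mod m)` and `n ∣ m`, then `γ_l·𝔅_l·diag(ε₀,ε₀⁻¹)·𝔅_l⁻¹·γ_l⁻¹` is an element of
`Γ₀(n)`, in fact of `Γ₀(m)`: it is an integral matrix of determinant one whose lower-left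
entry is divisible by `m` (hence by `n`). -/
theorem stmt_15 (D : ℤ) (hDpos : 0 < D) (hsf : Squarefree D) (hmod : D % 4 ≠ 1)
    (n : ℤ) (hn : 0 < n)
    (e₁ e₂ : ℤ) (ε₀ : ℝ)
    (hε : ε₀ = (e₁ : ℝ) + (e₂ : ℝ) * Real.sqrt D) (hε1 : 1 < ε₀)
    (hεinv : (e₁ : ℝ) - (e₂ : ℝ) * Real.sqrt D = ε₀⁻¹)
    (γl : SL(2, ℤ)) (𝔅 : Matrix (Fin 2) (Fin 2) ℝ) (h𝔅 : 0 < 𝔅.det)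
    (a b : ℚ) (ξ₁ ξ₂ : ℝ)
    (hξ₁ : ξ₁ = (a : ℝ) + (b : ℝ) * Real.sqrt D)
    (hξ₂ : ξ₂ = (a : ℝ) - (b : ℝ) * Real.sqrt D)
    (hpos₁ : 0 < ξ₁) (hpos₂ : 0 < ξ₂)
    (m μ : ℤ) (hm : 0 < m) (hμ : μ ^ 2 ≡ D [ZMOD m]) (hnm : n ∣ m)
    (heq : toRealMat γl * 𝔅 * Matrix.diagonal ![ξ₁, ξ₂] =
      (!![1, (μ : ℝ); 0, (m : ℝ)] : Matrix (Fin 2) (Fin 2) ℝ) * Mmat D) :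
    ∃ γ₀ : SL(2, ℤ),
      toRealMat γ₀ =
        toRealMat γl * 𝔅 * Matrix.diagonal ![ε₀, ε₀⁻¹] * 𝔅⁻¹ * (toRealMat γl)⁻¹ ∧
      m ∣ γ₀.1 1 0 ∧ n ∣ γ₀.1 1 0 := by
  -- basic facts
  have hD0 : (0:ℝ) ≤ (D:ℝ) := by exact_mod_cast hDpos.le
  have hsq : Real.sqrt D * Real.sqrt D = (D:ℝ) := Real.mul_self_sqrt hD0
  have hε0 : ε₀ ≠ 0 := by linarith
  have hm0 : (m:ℝ) ≠ 0 := by exact_mod_cast hm.ne'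
  obtain ⟨k, hk⟩ : m ∣ D - μ^2 := hμ.dvd
  have hk' : (D:ℝ) - (μ:ℝ)^2 = (m:ℝ) * (k:ℝ) := by exact_mod_cast congrArg (Int.cast : ℤ → ℝ) hk
  -- norm one
  have hnorm : e₁^2 - D * e₂^2 = 1 := by
    have h1 : ((e₁:ℝ) + e₂ * Real.sqrt D) * ((e₁:ℝ) - e₂ * Real.sqrt D) = 1 := by
      rw [hεinv, ← hε]; exact mul_inv_cancel₀ hε0
    have h2 : (e₁:ℝ)^2 - (D:ℝ) * (e₂:ℝ)^2 = 1 := by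
      linear_combination h1 + (e₂:ℝ)^2 * hsq
    exact_mod_cast h2
  -- the candidate matrix
  refine ⟨⟨!![e₁ + μ * e₂, e₂ * k; m * e₂, e₁ - μ * e₂], ?_⟩, ?_, ?_, ?_⟩
  · rw [Matrix.det_fin_two_of]
    nlinarith [hnorm, hk]
  · -- main matrix identity
    have hγ₀ : (⟨!![e₁ + μ * e₂, e₂ * k; m * e₂, e₁ - μ * e₂], by
        rw [Matrix.det_fin_two_of]; nlinarith [hnorm, hk]⟩ : SL(2,ℤ)).1.map
        ((↑) : ℤ → ℝ) = !![(e₁:ℝ) + μ * e₂, e₂ * k; m * e₂, e₁ - μ * e₂] := by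
      ext i j; fin_cases i <;> fin_cases j <;> simp
    show _ = _
    rw [show toRealMat ⟨_, _⟩ = _ from hγ₀]
    -- determinant facts
    have hdetγ : (toRealMat γl).det = 1 := by
      have h := γl.2
      rw [toRealMat, Matrix.det_fin_two] at *
      simp only [Matrix.map_apply]
      exact_mod_cast congrArg (Int.cast : ℤ → ℝ) h
    have hA : IsUnit (toRealMat γl * 𝔅).det := by
      rw [Matrix.det_mul, hdetγ, one_mul]; exact (isUnit_iff_ne_zero.mpr h𝔅.ne')
    have hξu : IsUnit (Matrix.diagonal ![ξ₁, ξ₂]).det := by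
      rw [Matrix.det_diagonal, Fin.prod_univ_two]
      exact isUnit_iff_ne_zero.mpr (mul_ne_zero hpos₁.ne' hpos₂.ne')
    -- key identity: γ₀ᴿ * (T*M) = (T*M) * diag ε
    have key : !![(e₁:ℝ) + μ * e₂, e₂ * k; m * e₂, e₁ - μ * e₂] *
        ((!![1, (μ : ℝ); 0, (m : ℝ)] : Matrix (Fin 2) (Fin 2) ℝ) * Mmat D) =
        ((!![1, (μ : ℝ); 0, (m : ℝ)] : Matrix (Fin 2) (Fin 2) ℝ) * Mmat D) *
        Matrix.diagonal ![ε₀, ε₀⁻¹] := by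
      rw [show ε₀⁻¹ = (e₁:ℝ) - (e₂:ℝ) * Real.sqrt D from hεinv.symm, hε, Mmat]
      ext i j
      fin_cases i <;> fin_cases j <;>
        simp [Matrix.mul_apply, Fin.sum_univ_two, Matrix.diagonal]
      all_goals
        first
        | ring1
        | linear_combination (-(e₂:ℝ)) * hsq - (e₂:ℝ) * hk'
    -- transfer to A = γlᴿ * 𝔅
    have h2 : !![(e₁:ℝ) + μ * e₂, e₂ * k; m * e₂, e₁ - μ * e₂] * (toRealMat γl * 𝔅) =
        (toRealMat γl * 𝔅) * Matrix.diagonal ![ε₀, ε₀⁻¹] := by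
      have hcomm : Matrix.diagonal ![ξ₁, ξ₂] * Matrix.diagonal ![ε₀, ε₀⁻¹] =
          Matrix.diagonal ![ε₀, ε₀⁻¹] * Matrix.diagonal ![ξ₁, ξ₂] := by
        rw [Matrix.diagonal_mul_diagonal, Matrix.diagonal_mul_diagonal]
        exact congrArg Matrix.diagonal (funext fun i => mul_comm _ _)
      have h3 : !![(e₁:ℝ) + μ * e₂, e₂ * k; m * e₂, e₁ - μ * e₂] *
          (toRealMat γl * 𝔅) * Matrix.diagonal ![ξ₁, ξ₂] =
          (toRealMat γl * 𝔅) * Matrix.diagonal ![ε₀, ε₀⁻¹] * Matrix.diagonal ![ξ₁, ξ₂] := by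
        rw [mul_assoc _ (toRealMat γl * 𝔅) (Matrix.diagonal ![ξ₁, ξ₂]), heq,
          mul_assoc (toRealMat γl * 𝔅) (Matrix.diagonal ![ε₀, ε₀⁻¹]) (Matrix.diagonal ![ξ₁, ξ₂]),
          ← hcomm, ← mul_assoc (toRealMat γl * 𝔅) (Matrix.diagonal ![ξ₁, ξ₂]), heq, key]
      calc !![(e₁:ℝ) + μ * e₂, e₂ * k; m * e₂, e₁ - μ * e₂] * (toRealMat γl * 𝔅)
          = _ * (Matrix.diagonal ![ξ₁, ξ₂]) * (Matrix.diagonal ![ξ₁, ξ₂])⁻¹ := by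
            rw [Matrix.mul_nonsing_inv_cancel_right _ _ hξu]
        _ = _ := by rw [h3, Matrix.mul_nonsing_inv_cancel_right _ _ hξu]
    rw [mul_assoc (toRealMat γl * 𝔅 * Matrix.diagonal ![ε₀, ε₀⁻¹]) 𝔅⁻¹ (toRealMat γl)⁻¹,
      ← Matrix.mul_inv_rev, ← h2, Matrix.mul_nonsing_inv_cancel_right _ _ hA]
  · exact ⟨e₂, by simp⟩
  · exact dvd_trans hnm ⟨e₂, by simp⟩
end

section
/- Let D < 0 be square-free with D ≢ 1 (mod 4). For n = 1, there exist points z₁, …, z_h ∈ ℍ (h = h(D) the class number of ℚ(√D)) such that for every positive integer m and residue μ mod m with μ² ≡ D (mod m), there exists a unique l and a unique double coset Γ_∞ γ Γ_{z_l} ∈ Γ_∞\SL(2,ℤ)/Γ_{z_l} with γ·z_l ≡ μ/m + i·√(−D)/m (mod Γ_∞); and conversely every such double coset arises from a unique (m, μ mod m). -/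
open Matrix MatrixGroups UpperHalfPlane

open Modular

/-- The subgroup `Γ_∞` of `SL(2,ℤ)`, generated by `[[1,1],[0,1]]` and `−1`. -/
def GammaInf : Subgroup SL(2, ℤ) :=
  Subgroup.closure {⟨!![1, 1; 0, 1], by norm_num [Matrix.det_fin_two_of]⟩, -1}

/-- `γ · z₀ = μ/m + i·√(−D)/m` modulo integer translation. -/
noncomputable def RootPointAt (D m μ : ℤ) (z₀ : UpperHalfPlane) (γ : SL(2, ℤ)) : Prop :=
  ∃ k : ℤ, ((γ • z₀ : UpperHalfPlane) : ℂ) =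
    (((μ : ℝ) / (m : ℝ) + (k : ℝ) : ℝ) : ℂ) +
      ((Real.sqrt (-D) / (m : ℝ) : ℝ) : ℂ) * Complex.I

namespace Stmt17Aux

lemma num_apply (g : SL(2, ℤ)) (z : ℍ) :
    UpperHalfPlane.num (g : GL(2,ℝ)⁺) z = (g 0 0 : ℂ) * z + (g 0 1 : ℂ) := by
  simp [UpperHalfPlane.num, UpperHalfPlane.coe]

lemma coe_smul_int (g : SL(2, ℤ)) (z : ℍ) :
    ((g • z : ℍ) : ℂ) = ((g 0 0 : ℂ) * z + (g 0 1 : ℂ)) / ((g 1 0 : ℂ) * z + (g 1 1 : ℂ)) := by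
  rw [ModularGroup.sl_moeb, UpperHalfPlane.coe_smul_of_det_pos (by simp), ModularGroup.denom_apply]
  simp [UpperHalfPlane.num]

lemma denom_ne_zero_int (g : SL(2, ℤ)) (z : ℍ) : ((g 1 0 : ℂ) * z + (g 1 1 : ℂ)) ≠ 0 := by
  have := UpperHalfPlane.denom_ne_zero (g : GL (Fin 2) ℝ) z
  rwa [ModularGroup.denom_apply] at this

/-- The set of CM points of discriminant `4D`. -/
def SRoot (D : ℤ) : Set ℍ :=
  {z | ∃ m μ : ℤ, 0 < m ∧ m ∣ μ ^ 2 - D ∧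
    (z : ℂ) = ((μ : ℂ) + (Real.sqrt (-(D:ℝ)) : ℂ) * Complex.I) / (m : ℂ)}

lemma sqrtD_sq {D : ℤ} (hD : D < 0) : (Real.sqrt (-(D:ℝ))) ^ 2 = -(D:ℝ) := by
  have : (D:ℝ) < 0 := by exact_mod_cast hD
  rw [Real.sq_sqrt]; linarith

lemma sqrtD_pos {D : ℤ} (hD : D < 0) : 0 < Real.sqrt (-(D:ℝ)) := by
  have : (D:ℝ) < 0 := by exact_mod_cast hD
  apply Real.sqrt_pos.2; linarith

lemma tD_sq {D : ℤ} (hD : D < 0) :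
    ((Real.sqrt (-(D:ℝ)) : ℂ) * Complex.I) * ((Real.sqrt (-(D:ℝ)) : ℂ) * Complex.I) = (D : ℂ) := by
  have h := sqrtD_sq hD
  have h2 : ((Real.sqrt (-(D:ℝ)) : ℂ)) * (Real.sqrt (-(D:ℝ)) : ℂ) = ((-(D:ℝ) : ℝ) : ℂ) := by
    rw [← Complex.ofReal_mul, ← pow_two, h]
  calc ((Real.sqrt (-(D:ℝ)) : ℂ) * Complex.I) * ((Real.sqrt (-(D:ℝ)) : ℂ) * Complex.I)
      = ((Real.sqrt (-(D:ℝ)) : ℂ) * (Real.sqrt (-(D:ℝ)) : ℂ)) * (Complex.I * Complex.I) := by ring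
    _ = ((-(D:ℝ) : ℝ) : ℂ) * (-1) := by rw [h2, Complex.I_mul_I]
    _ = (D : ℂ) := by push_cast; ring

lemma SRoot_smul_mem {D : ℤ} (hD : D < 0) {z : ℍ} (hz : z ∈ SRoot D) (γ : SL(2, ℤ)) :
    γ • z ∈ SRoot D := by
  obtain ⟨m, μ, hm, hdvd, hzeq⟩ := hz
  obtain ⟨e, he⟩ := hdvd
  obtain ⟨a, b, c, d, ha, hb, hc, hd⟩ :
      ∃ a b c d : ℤ, γ 0 0 = a ∧ γ 0 1 = b ∧ γ 1 0 = c ∧ γ 1 1 = d :=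
    ⟨_, _, _, _, rfl, rfl, rfl, rfl⟩
  have hdet : a * d - b * c = 1 := by
    have h2 := γ.det_coe
    rw [Matrix.det_fin_two] at h2
    rw [ha, hb, hc, hd] at h2
    linarith
  have hDR : (D:ℝ) < 0 := by exact_mod_cast hD
  set s : ℝ := Real.sqrt (-(D:ℝ)) with hs
  have hs2 : (s:ℂ) * Complex.I * ((s:ℂ) * Complex.I) = (D : ℂ) := tD_sq hD
  set m' : ℤ := c^2*e + 2*c*d*μ + d^2*m with hm'def
  set μ' : ℤ := a*c*e + (a*d+b*c)*μ + b*d*m with hμ'def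
  have hmm' : m * m' = (c*μ + d*m)^2 + c^2 * (-D) := by
    rw [hm'def]; linear_combination (-(c^2 : ℤ)) * he
  have hm'pos : 0 < m' := by
    rcases eq_or_ne c 0 with hc0 | hc0
    · have hd0 : d ≠ 0 := by
        intro hd0; rw [hc0, hd0] at hdet; simp at hdet
      have h2 : 0 < m * m' := by
        rw [hmm', hc0]
        have : 0 < (d*m)^2 := by positivity
        nlinarith
      nlinarith
    · have h1 : 1 ≤ c^2 := by
        have := Int.one_le_abs hc0
        nlinarith [sq_abs c]
      have h2 : 0 < m * m' := by rw [hmm']; nlinarith [sq_nonneg (c*μ + d*m)]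
      nlinarith
  have hdvd' : m' ∣ μ'^2 - D :=
    ⟨a^2*e + 2*a*b*μ + b^2*m, by
      rw [hμ'def, hm'def]
      linear_combination ((μ^2 - m*e)*(1 + a*d - b*c)) * hdet + he⟩
  refine ⟨m', μ', hm'pos, hdvd', ?_⟩
  have hm0 : (m : ℂ) ≠ 0 := by exact_mod_cast hm.ne'
  have hm'0 : (m' : ℂ) ≠ 0 := by exact_mod_cast hm'pos.ne'
  have hden := denom_ne_zero_int γ z
  rw [hc, hd] at hden
  rw [coe_smul_int, ha, hb, hc, hd, div_eq_div_iff hden hm'0, hzeq]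
  have heC : (μ:ℂ)^2 - (D:ℂ) = (m:ℂ)*(e:ℂ) := by exact_mod_cast he
  have hdetC : (a:ℂ)*(d:ℂ) - (b:ℂ)*(c:ℂ) = 1 := by exact_mod_cast hdet
  have key : ((a:ℂ) * ((μ:ℂ) + (s:ℂ)*Complex.I) + (b:ℂ)*(m:ℂ)) * ((m':ℂ)) =
      ((μ':ℂ) + (s:ℂ)*Complex.I) * ((c:ℂ)*((μ:ℂ)+(s:ℂ)*Complex.I) + (d:ℂ)*(m:ℂ)) := by
    rw [hm'def, hμ'def]
    push_cast
    linear_combination (-(c:ℂ))*hs2 + (c:ℂ)*heC +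
      ((d:ℂ)*(m:ℂ)*((s:ℂ)*Complex.I) + (c:ℂ)*(μ:ℂ)*((s:ℂ)*Complex.I) + (c:ℂ)*(μ:ℂ)^2
        - (c:ℂ)*(m:ℂ)*(e:ℂ))*hdetC
  have hwm : (((μ:ℂ) + (s:ℂ)*Complex.I) / (m:ℂ)) * (m:ℂ) = (μ:ℂ) + (s:ℂ)*Complex.I :=
    div_mul_cancel₀ _ hm0
  apply mul_right_cancel₀ hm0
  linear_combination key + ((a:ℂ)*(m':ℂ) - ((μ':ℂ) + (s:ℂ)*Complex.I)*(c:ℂ))*hwm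

lemma SRoot_mem_data {D : ℤ} {z : ℍ} {m μ : ℤ} (hm : 0 < m)
    (hzeq : (z : ℂ) = ((μ : ℂ) + (Real.sqrt (-(D:ℝ)) : ℂ) * Complex.I) / (m : ℂ)) :
    z.im * m = Real.sqrt (-(D:ℝ)) ∧ z.re * m = μ := by
  have hm0 : (m : ℂ) ≠ 0 := by exact_mod_cast hm.ne'
  have hzm : (z : ℂ) * m = (μ : ℂ) + (Real.sqrt (-(D:ℝ)) : ℂ) * Complex.I := by
    rw [hzeq, div_mul_cancel₀ _ hm0]
  constructor
  · have := congrArg Complex.im hzm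
    simpa [UpperHalfPlane.coe_im] using this
  · have := congrArg Complex.re hzm
    simpa [UpperHalfPlane.coe_re] using this

lemma SRoot_inter_fd_finite (D : ℤ) (hD : D < 0) : Set.Finite (SRoot D ∩ 𝒟) := by
  set s : ℝ := Real.sqrt (-(D:ℝ)) with hs
  have hF : Set.Finite ((fun p : ℤ × ℤ => ((p.2 : ℂ) + (s:ℂ) * Complex.I) / (p.1 : ℂ)) ''
      ((Finset.Icc (1:ℤ) (-2*D) ×ˢ Finset.Icc (2*D) (-2*D) : Finset (ℤ × ℤ)) : Set (ℤ × ℤ))) :=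
    Set.Finite.image _ (Finset.finite_toSet _)
  apply Set.Finite.subset (Set.Finite.preimage
    (Set.injOn_of_injective (fun a b hab => UpperHalfPlane.ext hab)) hF)
  rintro z ⟨⟨m, μ, hm, hdvd, hzeq⟩, hz1, hz2⟩
  obtain ⟨him, hre⟩ := SRoot_mem_data hm hzeq
  have him3 : 3 ≤ 4 * z.im ^ 2 := ModularGroup.three_le_four_mul_im_sq_of_mem_fd ⟨hz1, hz2⟩
  have hmR : (0:ℝ) < (m:ℝ) := by exact_mod_cast hm
  have hs2 : s ^ 2 = -(D:ℝ) := sqrtD_sq hD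
  have hDneg : (D:ℝ) < 0 := by exact_mod_cast hD
  have hb1 : 3 * (m:ℝ)^2 ≤ 4 * (-(D:ℝ)) := by
    have : (z.im * m)^2 = -(D:ℝ) := by rw [him, hs2]
    nlinarith [z.im_pos, sq_nonneg (z.im*m)]
  have hm1 : (1:ℝ) ≤ (m:ℝ) := by exact_mod_cast hm
  have hD1' : D ≤ -1 := by omega
  have hD1 : (D:ℝ) ≤ -1 := by exact_mod_cast hD1'
  have hmle : (m:ℝ) ≤ -2*(D:ℝ) := by nlinarith [sq_nonneg ((m:ℝ)-1)]
  have hmleZ : m ≤ -2*D := by exact_mod_cast hmle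
  have hμabs : |(μ:ℝ)| ≤ (m:ℝ)/2 := by
    rw [← hre, abs_mul, abs_of_pos hmR]
    calc |z.re| * m ≤ (1/2) * m := by
          apply mul_le_mul_of_nonneg_right hz2 (le_of_lt hmR)
      _ = (m:ℝ)/2 := by ring
  have hμle : 2*D ≤ μ ∧ μ ≤ -2*D := by
    rw [abs_le] at hμabs
    constructor
    · have h1 : -((m:ℝ)/2) ≤ (μ:ℝ) := hμabs.1
      have h2 : (2*D : ℝ) ≤ (μ:ℝ) := by nlinarith
      exact_mod_cast h2
    · have h1 : (μ:ℝ) ≤ (m:ℝ)/2 := hμabs.2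
      have h2 : (μ:ℝ) ≤ (-2*D : ℝ) := by nlinarith
      exact_mod_cast h2
  refine ⟨(m, μ), ?_, ?_⟩
  · simp only [Finset.coe_product, Set.mem_prod, Finset.mem_coe, Finset.mem_Icc]
    exact ⟨⟨hm, hmleZ⟩, hμle.1, hμle.2⟩
  · exact hzeq.symm

/-- The orbit equivalence relation on `SRoot D`. -/
def orbSetoid (D : ℤ) : Setoid {z : ℍ // z ∈ SRoot D} where
  r x y := ∃ γ : SL(2,ℤ), γ • (x : ℍ) = (y : ℍ)
  iseqv := by
    refine ⟨fun x => ⟨1, one_smul _ _⟩, ?_, ?_⟩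
    · rintro x y ⟨γ, hγ⟩
      exact ⟨γ⁻¹, by rw [← hγ, inv_smul_smul]⟩
    · rintro x y w ⟨γ, hγ⟩ ⟨δ, hδ⟩
      exact ⟨δ*γ, by rw [mul_smul, hγ, hδ]⟩

lemma orbQuot_finite (D : ℤ) (hD : D < 0) : Finite (Quotient (orbSetoid D)) := by
  haveI := (SRoot_inter_fd_finite D hD).to_subtype
  set g : Quotient (orbSetoid D) → SL(2,ℤ) :=
    fun q => Classical.choose (ModularGroup.exists_smul_mem_fd (q.out : {z : ℍ // z ∈ SRoot D}).1)
    with hg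
  have hgspec : ∀ q : Quotient (orbSetoid D), g q • (q.out).1 ∈ 𝒟 :=
    fun q => Classical.choose_spec (ModularGroup.exists_smul_mem_fd (q.out).1)
  set F : Quotient (orbSetoid D) → ↥(SRoot D ∩ 𝒟) :=
    fun q => ⟨g q • (q.out).1, SRoot_smul_mem hD (q.out).2 _, hgspec q⟩ with hF
  apply Finite.of_injective F
  intro q q' hqq'
  have hval : g q • (q.out).1 = g q' • (q'.out).1 := congrArg Subtype.val hqq'
  have hrel : (orbSetoid D) q.out q'.out := by
    refine ⟨(g q')⁻¹ * g q, ?_⟩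
    rw [mul_smul, hval, inv_smul_smul]
  calc q = ⟦q.out⟧ := (Quotient.out_eq q).symm
    _ = ⟦q'.out⟧ := Quotient.sound hrel
    _ = q' := Quotient.out_eq q'

lemma T_mem_GammaInf : ModularGroup.T ∈ GammaInf :=
  Subgroup.subset_closure (Set.mem_insert_iff.mpr (Or.inl (Subtype.ext rfl)))

end Stmt17Aux

open Stmt17Aux

/-- for `D < 0` squarefree with `D ≢ 1 (mod 4)` (and `n = 1`), there are
points `z₁, …, z_h ∈ ℍ` such that every root `μ mod m` of `μ² ≡ D (mod m)` corresponds to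
a unique `l` and a unique double coset `Γ_∞ γ Γ_{z_l}` with
`γ·z_l ≡ μ/m + i·√(−D)/m (mod Γ_∞)`, and conversely every such double coset arises from a
unique pair `(m, μ mod m)`. -/
theorem stmt_17 (D : ℤ) (hD : D < 0) (hsf : Squarefree D) (hmod : D % 4 ≠ 1) :
    ∃ (h : ℕ) (z : Fin h → UpperHalfPlane),
      -- (i) each root corresponds to a unique `l` and double coset `Γ_∞ γ Γ_{z_l}`
      (∀ m μ : ℤ, 0 < m → μ ^ 2 ≡ D [ZMOD m] →
        (∃ (l : Fin h) (γ : SL(2, ℤ)), RootPointAt D m μ (z l) γ) ∧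
        (∀ (l l' : Fin h) (γ γ' : SL(2, ℤ)),
          RootPointAt D m μ (z l) γ → RootPointAt D m μ (z l') γ' →
            l = l' ∧ ∃ δ₁ ∈ GammaInf, ∃ δ₂ ∈ MulAction.stabilizer SL(2, ℤ) (z l),
              γ' = δ₁ * γ * δ₂)) ∧
      -- (ii) conversely each `(l, γ)` comes from a unique `(m, μ mod m)`
      (∀ (l : Fin h) (γ : SL(2, ℤ)),
        ∃ m μ : ℤ, (0 < m ∧ μ ^ 2 ≡ D [ZMOD m] ∧ RootPointAt D m μ (z l) γ) ∧
          ∀ m' μ' : ℤ, 0 < m' → μ' ^ 2 ≡ D [ZMOD m'] → RootPointAt D m' μ' (z l) γ →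
            m' = m ∧ μ' ≡ μ [ZMOD m]) := by
  classical
  haveI := orbQuot_finite D hD
  obtain ⟨h, ⟨eqv⟩⟩ := Finite.exists_equiv_fin (Quotient (orbSetoid D))
  set s : ℝ := Real.sqrt (-(D:ℝ)) with hs
  have hspos : 0 < s := sqrtD_pos hD
  set z : Fin h → ℍ := fun l => (((eqv.symm l).out : {w : ℍ // w ∈ SRoot D}) : ℍ) with hz
  have hzS : ∀ l, z l ∈ SRoot D := fun l => ((eqv.symm l).out).2
  -- `RootPointAt` from the `SRoot` presentation, with `k = 0`
  have hroot_of_eq : ∀ (m μ : ℤ) (w : ℍ) (γ : SL(2,ℤ)), 0 < m →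
      ((γ • w : ℍ) : ℂ) = ((μ : ℂ) + (s:ℂ) * Complex.I) / (m:ℂ) →
      RootPointAt D m μ w γ := by
    intro m μ w γ hm hcoe
    refine ⟨0, ?_⟩
    rw [hcoe]
    have hm0 : (m : ℂ) ≠ 0 := by exact_mod_cast hm.ne'
    push_cast
    field_simp
    rw [hs]; ring
  -- the imaginary and real parts of the target point
  have htarget : ∀ (m μ k : ℤ),
      ((((μ:ℝ)/(m:ℝ) + (k:ℝ) : ℝ) : ℂ) + ((s/(m:ℝ) : ℝ) : ℂ) * Complex.I).im = s/(m:ℝ) ∧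
      ((((μ:ℝ)/(m:ℝ) + (k:ℝ) : ℝ) : ℂ) + ((s/(m:ℝ) : ℝ) : ℂ) * Complex.I).re
        = (μ:ℝ)/(m:ℝ) + (k:ℝ) := by
    intro m μ k
    constructor <;> simp
  refine ⟨h, z, ?_, ?_⟩
  · -- part (i)
    intro m μ hm hmodeq
    have hdvd : m ∣ μ^2 - D := Int.ModEq.dvd hmodeq.symm
    have hm0 : (m : ℂ) ≠ 0 := by exact_mod_cast hm.ne'
    have hmR : (0:ℝ) < (m:ℝ) := by exact_mod_cast hm
    -- the target point in ℍ
    set wC : ℂ := ((μ:ℂ) + (s:ℂ) * Complex.I) / (m:ℂ) with hwC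
    have hwCim : wC.im = s / m := by
      rw [hwC]
      rw [show ((μ:ℂ) + (s:ℂ) * Complex.I) / (m:ℂ)
          = (((μ:ℝ)/(m:ℝ) : ℝ) : ℂ) + ((s/(m:ℝ) : ℝ) : ℂ) * Complex.I by
        push_cast; field_simp]
      simp
    have hwCpos : 0 < wC.im := by rw [hwCim]; positivity
    set w : ℍ := UpperHalfPlane.mk wC hwCpos with hw
    have hwS : w ∈ SRoot D := ⟨m, μ, hm, hdvd, rfl⟩
    set l : Fin h := eqv ⟦(⟨w, hwS⟩ : {w : ℍ // w ∈ SRoot D})⟧ with hl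
    have hout : (orbSetoid D) (eqv.symm l).out ⟨w, hwS⟩ := by
      rw [hl, Equiv.symm_apply_apply]
      exact Quotient.mk_out _
    obtain ⟨γ, hγ⟩ := hout
    constructor
    · exact ⟨l, γ, hroot_of_eq m μ (z l) γ hm (by rw [hz]; simp only; rw [hγ])⟩
    · intro l₁ l₂ γ₁ γ₂ h₁ h₂
      obtain ⟨k₁, hk₁⟩ := h₁
      obtain ⟨k₂, hk₂⟩ := h₂
      -- the two images differ by T^(k₂ - k₁)
      have heq : γ₂ • z l₂ = ModularGroup.T ^ (k₂ - k₁) • (γ₁ • z l₁) := by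
        apply UpperHalfPlane.ext
        rw [ModularGroup.coe_T_zpow_smul_eq, hk₁, hk₂]
        push_cast
        ring
      have hll : l₁ = l₂ := by
        have hrel : (orbSetoid D) (eqv.symm l₁).out (eqv.symm l₂).out := by
          refine ⟨γ₂⁻¹ * (ModularGroup.T ^ (k₂ - k₁) * γ₁), ?_⟩
          rw [mul_smul, mul_smul]
          show γ₂⁻¹ • (ModularGroup.T ^ (k₂ - k₁) • (γ₁ • z l₁)) = z l₂
          rw [← heq, inv_smul_smul]
        have : (⟦(eqv.symm l₁).out⟧ : Quotient (orbSetoid D)) = ⟦(eqv.symm l₂).out⟧ :=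
          Quotient.sound hrel
        rw [Quotient.out_eq, Quotient.out_eq] at this
        exact eqv.symm.injective this
      subst hll
      refine ⟨rfl, ModularGroup.T ^ (k₂ - k₁), zpow_mem T_mem_GammaInf _,
        γ₁⁻¹ * (ModularGroup.T ^ (k₂ - k₁))⁻¹ * γ₂, ?_, by group⟩
      rw [MulAction.mem_stabilizer_iff, mul_smul, mul_smul]
      show γ₁⁻¹ • ((ModularGroup.T ^ (k₂ - k₁))⁻¹ • (γ₂ • z l₁)) = z l₁
      rw [heq, inv_smul_smul, inv_smul_smul]
  · -- part (ii)
    intro l γ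
    obtain ⟨m, μ, hm, hdvd, hzeq⟩ := SRoot_smul_mem hD (hzS l) γ
    have hmodeq : μ ^ 2 ≡ D [ZMOD m] := by
      have : m ∣ D - μ^2 := by
        rw [show D - μ^2 = -(μ^2 - D) by ring]
        exact dvd_neg.mpr hdvd
      exact Int.modEq_iff_dvd.mpr this
    refine ⟨m, μ, ⟨hm, hmodeq, hroot_of_eq m μ (z l) γ hm hzeq⟩, ?_⟩
    intro m' μ' hm' hmodeq' hroot'
    obtain ⟨k, hk⟩ := hroot'
    obtain ⟨him, hre⟩ := SRoot_mem_data (D := D) hm hzeq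
    have himk := congrArg Complex.im hk
    have hrek := congrArg Complex.re hk
    rw [(htarget m' μ' k).1] at himk
    rw [(htarget m' μ' k).2] at hrek
    have hm'R : (0:ℝ) < (m':ℝ) := by exact_mod_cast hm'
    have hmR : (0:ℝ) < (m:ℝ) := by exact_mod_cast hm
    -- m' = m from comparing imaginary parts
    have hmm' : m' = m := by
      have h1 : (γ • z l : ℍ).im = s / m' := by
        rw [← UpperHalfPlane.coe_im]; exact himk
      have h2 : (s / m') * m = s := by rw [← h1]; exact him
      field_simp at h2
      exact_mod_cast h2.symm
    subst hmm'
    refine ⟨rfl, ?_⟩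
    -- μ' ≡ μ [ZMOD m'] from comparing real parts
    have h1 : (γ • z l : ℍ).re = (μ':ℝ)/(m':ℝ) + (k:ℝ) := by
      rw [← UpperHalfPlane.coe_re]; exact hrek
    have h2 : ((μ':ℝ)/(m':ℝ) + (k:ℝ)) * m' = μ := by rw [← h1]; exact hre
    have h3 : (μ':ℝ) + (k:ℝ)*(m':ℝ) = (μ:ℝ) := by
      field_simp at h2
      linarith [h2]
    have h4 : μ' + k*m' = μ := by exact_mod_cast h3
    have : (m':ℤ) ∣ μ - μ' := ⟨k, by linarith [h4]⟩
    exact Int.modEq_iff_dvd.mpr this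
end

section
/- For γ = [[a,b],[c,d]] ∈ SL(2,ℤ) one has γ·i = μ/m + i/m where m = c² + d² and μ = ac + bd; moreover μ² ≡ −1 (mod m). Conversely, for any m > 0 and μ with μ² ≡ −1 (mod m), there exists γ ∈ SL(2,ℤ) with γ·i = μ/m + i/m. -/
open Complex

lemma gi_norm (c d : ℤ) : (⟨c, d⟩ : GaussianInt).norm = c ^ 2 + d ^ 2 := by
  simp [Zsqrtd.norm]; ring

/-- Key lemma: if `n > 0` divides `μ² + 1`, there is a Gaussian integer of norm `n`
dividing `μ + i`. -/
lemma key_gauss : ∀ n : ℕ, ∀ μ : ℤ, 0 < n → (n : ℤ) ∣ μ ^ 2 + 1 →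
    ∃ z : GaussianInt, z.norm = n ∧ z ∣ ⟨μ, 1⟩ := by
  intro n
  induction n using Nat.strong_induction_on with
  | _ n ih =>
    intro μ hn hd
    rcases eq_or_lt_of_le (Nat.one_le_iff_ne_zero.mpr hn.ne') with h1 | h2
    · -- n = 1
      refine ⟨1, ?_, one_dvd _⟩
      simp [Zsqrtd.norm, ← h1]
    · -- n ≥ 2
      set m : ℤ := (n : ℤ) with hm
      have hm0 : 0 < m := by rw [hm]; exact_mod_cast hn
      have hm2 : 2 ≤ m := by rw [hm]; exact_mod_cast h2
      set r := μ % m with hr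
      have hr0 : 0 ≤ r := Int.emod_nonneg μ hm0.ne'
      have hrm : r < m := Int.emod_lt_of_pos μ hm0
      have hdr : m ∣ μ - r := Int.dvd_self_sub_of_emod_eq rfl
      set μ' : ℤ := if 2 * r ≤ m then r else r - m with hμ'
      have hdvdμ : m ∣ μ - μ' := by
        rcases le_or_gt (2 * r) m with h | h
        · simpa [hμ', if_pos h] using hdr
        · have heq : μ - μ' = (μ - r) + m := by
            simp only [hμ', if_neg (not_le.mpr h)]; ring
          rw [heq]; exact dvd_add hdr (dvd_refl m)
      have hsq : 4 * μ' ^ 2 ≤ m ^ 2 := by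
        rcases le_or_gt (2 * r) m with h | h
        · simp only [hμ', if_pos h]; nlinarith
        · simp only [hμ', if_neg (not_le.mpr h)]
          have h1 : m + 1 ≤ 2 * r := h
          nlinarith
      -- m divides μ'^2 + 1
      have hdμ' : m ∣ μ' ^ 2 + 1 := by
        have hμμ : m ∣ μ ^ 2 - μ' ^ 2 := by
          have heq : μ ^ 2 - μ' ^ 2 = (μ - μ') * (μ + μ') := by ring
          rw [heq]; exact hdvdμ.mul_right _
        have := dvd_sub hd hμμ
        simpa [show μ ^ 2 + 1 - (μ ^ 2 - μ' ^ 2) = μ' ^ 2 + 1 by ring] using this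
      obtain ⟨k, hk⟩ := hdμ'
      have hk0 : 0 < k := by nlinarith [sq_nonneg μ']
      have hkm : k < m := by nlinarith
      -- apply induction hypothesis to k
      have hknat : ((k.toNat : ℕ) : ℤ) = k := Int.toNat_of_nonneg hk0.le
      have hkn : k.toNat < n := by omega
      obtain ⟨w, hwnorm, hwdvd⟩ := ih k.toNat hkn μ'
        (by omega) (by rw [hknat]; exact ⟨m, by rw [hk]; ring⟩)
      rw [hknat] at hwnorm
      obtain ⟨t, ht⟩ := hwdvd
      have hnt : t.norm = m := by
        have h1 : (⟨μ', 1⟩ : GaussianInt).norm = μ' ^ 2 + 1 := gi_norm μ' 1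
        have hmult : (⟨μ', 1⟩ : GaussianInt).norm = w.norm * t.norm := by
          rw [ht, Zsqrtd.norm_mul]
        rw [h1, hk, hwnorm] at hmult
        exact (mul_left_cancel₀ hk0.ne' (by linarith [hmult]))
      refine ⟨t, by rw [hnt], ?_⟩
      -- t divides μ + i
      have htm : t ∣ (m : GaussianInt) := by
        refine ⟨star t, ?_⟩
        have hh := Zsqrtd.norm_eq_mul_conj t
        rw [hnt] at hh
        exact_mod_cast hh
      have htμ' : t ∣ (⟨μ', 1⟩ : GaussianInt) := ⟨w, by rw [ht, mul_comm]⟩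
      have hsplit : (⟨μ, 1⟩ : GaussianInt) = ⟨μ', 1⟩ + ((μ - μ' : ℤ) : GaussianInt) := by
        ext <;> simp [Zsqrtd.re_intCast, Zsqrtd.im_intCast]
      rw [hsplit]
      exact dvd_add htμ' (dvd_trans htm (by exact_mod_cast hdvdμ))

/-- for `[[a,b],[c,d]] ∈ SL(2,ℤ)` one has
`(a·i+b)/(c·i+d) = μ/m + i/m` with `m = c²+d²`, `μ = ac+bd`, and `μ² ≡ −1 (mod m)`;
conversely every root `μ` of `μ² ≡ −1 (mod m)`, `m > 0`, arises this way. -/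
theorem stmt_18 :
    (∀ a b c d : ℤ, a * d - b * c = 1 →
      ((a : ℂ) * Complex.I + b) / ((c : ℂ) * Complex.I + d) =
        (((a * c + b * d : ℤ) : ℂ) / ((c ^ 2 + d ^ 2 : ℤ) : ℂ)) +
          Complex.I / ((c ^ 2 + d ^ 2 : ℤ) : ℂ) ∧
      (a * c + b * d) ^ 2 ≡ -1 [ZMOD (c ^ 2 + d ^ 2)]) ∧
    (∀ m μ : ℤ, 0 < m → μ ^ 2 ≡ -1 [ZMOD m] →
      ∃ a b c d : ℤ, a * d - b * c = 1 ∧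
        ((a : ℂ) * Complex.I + b) / ((c : ℂ) * Complex.I + d) =
          ((μ : ℂ) / (m : ℂ)) + Complex.I / (m : ℂ)) := by
  constructor
  · intro a b c d h
    have hcd : ¬(c = 0 ∧ d = 0) := by
      rintro ⟨rfl, rfl⟩; simp at h
    have hmpos : 0 < c ^ 2 + d ^ 2 := by
      rcases not_and_or.mp hcd with hc | hd
      · have h1 : 0 < c ^ 2 := lt_of_le_of_ne (sq_nonneg c) (Ne.symm (pow_ne_zero 2 hc))
        linarith [sq_nonneg d]
      · have h1 : 0 < d ^ 2 := lt_of_le_of_ne (sq_nonneg d) (Ne.symm (pow_ne_zero 2 hd))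
        linarith [sq_nonneg c]
    constructor
    · have hne : (c : ℂ) * Complex.I + d ≠ 0 := by
        intro hz
        rw [Complex.ext_iff] at hz
        simp at hz
        exact hcd ⟨by exact_mod_cast hz.2, by exact_mod_cast hz.1⟩
      have hmC : ((c ^ 2 + d ^ 2 : ℤ) : ℂ) ≠ 0 := by
        exact_mod_cast hmpos.ne'
      have hC : (a : ℂ) * d - b * c = 1 := by exact_mod_cast h
      rw [← add_div, div_eq_div_iff hne hmC]
      push_cast
      linear_combination ((d : ℂ) * Complex.I - c) * hC + (-(c:ℂ)) * Complex.I_sq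
    · have hdd : (c ^ 2 + d ^ 2) ∣ (-1 - (a * c + b * d) ^ 2) := by
        refine ⟨-(a ^ 2 + b ^ 2), ?_⟩
        nlinarith [h]
      exact Int.modEq_iff_dvd.mpr hdd
  · intro m μ hm hcong
    have hdvd : m ∣ μ ^ 2 + 1 := by
      have hh := Int.ModEq.dvd hcong
      have heq : -1 - μ ^ 2 = -(μ ^ 2 + 1) := by ring
      rw [heq, dvd_neg] at hh
      exact hh
    obtain ⟨z, hznorm, hzdvd⟩ := key_gauss m.toNat μ (by omega)
      (by rw [Int.toNat_of_nonneg hm.le]; exact hdvd)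
    rw [Int.toNat_of_nonneg hm.le] at hznorm
    set c := z.re with hc
    set d := z.im with hd0
    have hcd : c ^ 2 + d ^ 2 = m := by rw [← hznorm, ← gi_norm]
    obtain ⟨u, hu⟩ := hzdvd
    have hmul : (star z) * (⟨μ, 1⟩ : GaussianInt) = (m : GaussianInt) * u := by
      rw [hu, ← mul_assoc, mul_comm (star z) z, ← Zsqrtd.norm_eq_mul_conj, hznorm]
    have hre : c * μ + d = m * u.re := by
      have hh := congrArg Zsqrtd.re hmul
      simpa [Zsqrtd.re_mul, Zsqrtd.im_mul] using hh
    have him : c - d * μ = m * u.im := by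
      have hh := congrArg Zsqrtd.im hmul
      simpa [Zsqrtd.re_mul, Zsqrtd.im_mul, mul_comm, sub_eq_add_neg, hc, hd0] using hh
    refine ⟨u.re, -u.im, c, d, ?_, ?_⟩
    · -- determinant
      have hcancel : m * (u.re * d - (-u.im) * c) = m * 1 := by
        linear_combination (-d) * hre + (-c) * him + hcd
      exact mul_left_cancel₀ hm.ne' hcancel
    · have hne : (c : ℂ) * Complex.I + d ≠ 0 := by
        intro hz
        rw [Complex.ext_iff] at hz
        simp at hz
        have hc0 : c = 0 := by exact_mod_cast hz.2
        have hd00 : d = 0 := by exact_mod_cast hz.1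
        rw [hc0, hd00] at hcd
        simp at hcd; omega
      have hmne : (m : ℂ) ≠ 0 := by exact_mod_cast hm.ne'
      have hreC : (c : ℂ) * μ + d = m * u.re := by exact_mod_cast hre
      have himC : (c : ℂ) - d * μ = m * u.im := by exact_mod_cast him
      rw [← add_div, div_eq_div_iff hne hmne]
      push_cast
      linear_combination -Complex.I * hreC + himC + (-(c:ℂ)) * Complex.I_sq
end
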